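/- arXiv:1901.01719 — 7 statements merged into one kernel-verified Lean document; each statement's English description precedes it below -/
import Mathlib

section
/- Let (α_n)_{n≥1} and (β_n)_{n≥1} be real sequences, and let (f_n)_{n≥0} be real polynomials with f_0 = 1 and f_n(x) = (α_n x + β_n)·f_{n−1}(x) for all n ≥ 1. Suppose (P_n)_{n≥0} are real polynomials satisfying, as an identity of formal power series in t, P_n(t) = (1−t)^{n+1} · Σ_{k≥0} f_n(k) t^k for each n ≥ 0. Then for every n ≥ 1, P_n(t) = ((α_n n − β_n) t + β_n) · P_{n−1}(t) + α_n · t(1−t) · P'_{n−1}(t), where P' denotes the formal derivative. -/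
open Polynomial PowerSeries

lemma mk_mul_eq_X_mul_deriv (g : ℕ → ℝ) :
    PowerSeries.mk (fun k => (k : ℝ) * g k)
      = PowerSeries.X * d⁄dX ℝ (PowerSeries.mk g) := by
  ext k
  cases k with
  | zero => simp
  | succ k =>
      rw [PowerSeries.coeff_succ_X_mul, PowerSeries.coeff_mk,
        PowerSeries.coeff_derivative, PowerSeries.coeff_mk]
      push_cast
      ring

/-- If `f_n(x) = (α_n x + β_n) f_{n-1}(x)` with `f_0 = 1`, and the polynomials `P_n`
satisfy `P_n(t) = (1-t)^{n+1} Σ_{k≥0} f_n(k) t^k` as formal power series, then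
`P_n(t) = ((α_n n - β_n) t + β_n) P_{n-1}(t) + α_n t (1-t) P'_{n-1}(t)`. -/
theorem rational_gf_recurrence (α β : ℕ → ℝ) (f P : ℕ → Polynomial ℝ)
    (hf0 : f 0 = 1)
    (hf : ∀ n : ℕ, 1 ≤ n →
      f n = (Polynomial.C (α n) * Polynomial.X + Polynomial.C (β n)) * f (n - 1))
    (hP : ∀ n : ℕ, (P n : PowerSeries ℝ)
        = (1 - PowerSeries.X) ^ (n + 1) * PowerSeries.mk (fun k => (f n).eval (k : ℝ)))
    (n : ℕ) (hn : 1 ≤ n) :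
    P n = (Polynomial.C (α n * n - β n) * Polynomial.X + Polynomial.C (β n)) * P (n - 1)
      + Polynomial.C (α n) * Polynomial.X * (1 - Polynomial.X)
        * Polynomial.derivative (P (n - 1)) := by
  obtain ⟨m, rfl⟩ : ∃ m, n = m + 1 := ⟨n - 1, (Nat.succ_pred_eq_of_pos hn).symm⟩
  rw [← Polynomial.coe_inj]
  simp only [Nat.add_sub_cancel] at *
  set A : PowerSeries ℝ := PowerSeries.mk (fun k => (f m).eval (k : ℝ)) with hA
  -- coefficient series for f (m+1)
  have hmk : PowerSeries.mk (fun k => (f (m + 1)).eval (k : ℝ))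
      = PowerSeries.C (α (m + 1)) * (PowerSeries.X * d⁄dX ℝ A)
        + PowerSeries.C (β (m + 1)) * A := by
    rw [hA, ← mk_mul_eq_X_mul_deriv]
    ext k
    simp only [map_add, PowerSeries.coeff_mk, PowerSeries.coeff_C_mul,
      hf (m + 1) (Nat.le_add_left 1 m), Nat.add_sub_cancel]
    simp [Polynomial.eval_mul]
    ring
  have hderiv1X : d⁄dX ℝ (1 - PowerSeries.X : PowerSeries ℝ) = -1 := by
    simp
  have hDpow : d⁄dX ℝ ((1 - PowerSeries.X) ^ (m + 1) * A)
      = (1 - PowerSeries.X) ^ (m + 1) * d⁄dX ℝ A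
        - ((m + 1 : ℕ) : PowerSeries ℝ) * (1 - PowerSeries.X) ^ m * A := by
    rw [Derivation.leibniz, Derivation.leibniz_pow, hderiv1X]
    simp only [smul_eq_mul, nsmul_eq_mul, Nat.add_sub_cancel, Nat.add_sub_cancel_left]
    ring
  have hPm : ((P m : Polynomial ℝ) : PowerSeries ℝ)
      = (1 - PowerSeries.X) ^ (m + 1) * A := hP m
  have hDPm : ((Polynomial.derivative (P m) : Polynomial ℝ) : PowerSeries ℝ)
      = (1 - PowerSeries.X) ^ (m + 1) * d⁄dX ℝ A
        - ((m + 1 : ℕ) : PowerSeries ℝ) * (1 - PowerSeries.X) ^ m * A := by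
    rw [← PowerSeries.derivative_coe, hPm, hDpow]
  have hcast : ((m + 1 : ℕ) : PowerSeries ℝ) = PowerSeries.C ((m : ℝ) + 1) := by
    push_cast
    simp [map_add]
  rw [hcast] at hDPm
  simp only [Polynomial.coe_add, Polynomial.coe_mul, Polynomial.coe_sub, Polynomial.coe_one,
    Polynomial.coe_C, Polynomial.coe_X, hP (m + 1), hmk, hPm, hDPm]
  simp only [map_add, map_sub, map_mul, map_one, map_natCast, Nat.cast_add, Nat.cast_one]
  ring
end

section
/- Let (α_n)_{n≥1} and (β_n)_{n≥1} be real sequences, and let (f_n)_{n≥0} be real polynomials with f_0 = 1 and f_n(x) = (α_n x + β_n)·f_{n−1}(x) for all n ≥ 1. Suppose (P_n)_{n≥0} are real polynomials satisfying, as an identity of formal power series in t, P_n(t) = (1−t)^{n+1} · Σ_{k≥0} f_n(k) t^k for each n ≥ 0. Then for every n ≥ 0, P_n(1) = n! · Π_{i=1}^{n} α_i. -/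
open Polynomial PowerSeries

private lemma mk_mul_nat (g : ℕ → ℝ) : PowerSeries.mk (fun k => (k:ℝ) * g k)
    = PowerSeries.X * PowerSeries.derivativeFun (PowerSeries.mk g) := by
  ext m
  cases m with
  | zero => simp
  | succ m =>
    rw [PowerSeries.coeff_succ_X_mul]
    show _ = PowerSeries.coeff m ((d⁄dX ℝ) _)
    rw [PowerSeries.coeff_derivativeFun]
    simp [mul_comm]

private lemma one_sub_mul_mk_one : (1 - PowerSeries.X : PowerSeries ℝ) * PowerSeries.mk (fun _ => (1:ℝ)) = 1 := by
  ext m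
  cases m with
  | zero => simp
  | succ m =>
    rw [sub_mul, one_mul, map_sub, PowerSeries.coeff_succ_X_mul]
    simp

private lemma deriv_one_sub_pow (m : ℕ) :
    PowerSeries.derivativeFun (((1 - PowerSeries.X)^(m+1)) : PowerSeries ℝ)
    = -((m+1 : ℕ) : PowerSeries ℝ) * (1 - PowerSeries.X)^m := by
  have h1 : (d⁄dX ℝ) ((1 - PowerSeries.X) : PowerSeries ℝ) = -1 := by
    rw [(d⁄dX ℝ).map_sub]; simp
  have h := Derivation.leibniz_pow (d⁄dX ℝ) (a := (1 - PowerSeries.X : PowerSeries ℝ)) (m+1)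
  simp only [Nat.add_sub_cancel, h1] at h
  show (d⁄dX ℝ) _ = _
  rw [h]
  simp only [smul_eq_mul, nsmul_eq_mul]
  push_cast
  ring

/-- If `f_n(x) = (α_n x + β_n) f_{n-1}(x)` with `f_0 = 1`, and the polynomials `P_n`
satisfy `P_n(t) = (1-t)^{n+1} Σ_{k≥0} f_n(k) t^k` as formal power series, then
`P_n(1) = n! ∏_{i=1}^n α_i`. -/
theorem rational_gf_eval_one (α β : ℕ → ℝ) (f P : ℕ → Polynomial ℝ)
    (hf0 : f 0 = 1)
    (hf : ∀ n : ℕ, 1 ≤ n →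
      f n = (Polynomial.C (α n) * Polynomial.X + Polynomial.C (β n)) * f (n - 1))
    (hP : ∀ n : ℕ, (P n : PowerSeries ℝ)
        = (1 - PowerSeries.X) ^ (n + 1) * PowerSeries.mk (fun k => (f n).eval (k : ℝ)))
    (n : ℕ) :
    (P n).eval 1 = (Nat.factorial n : ℝ) * ∏ i ∈ Finset.Icc 1 n, α i := by
  induction n with
  | zero =>
    have h0 : (P 0 : PowerSeries ℝ) = ((1 : Polynomial ℝ) : PowerSeries ℝ) := by
      rw [hP 0, hf0]
      simpa using one_sub_mul_mk_one
    rw [Polynomial.coe_inj] at h0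
    simp [h0]
  | succ n ih =>
    set a := α (n+1)
    set b := β (n+1)
    set G : PowerSeries ℝ := PowerSeries.mk (fun k => (f n).eval (k:ℝ)) with hG
    have hPn : (P n : PowerSeries ℝ) = (1 - PowerSeries.X)^(n+1) * G := hP n
    -- mk for f (n+1)
    have hmk : PowerSeries.mk (fun k => (f (n+1)).eval (k:ℝ))
        = PowerSeries.C a * (PowerSeries.X * PowerSeries.derivativeFun G)
          + PowerSeries.C b * G := by
      rw [← mk_mul_nat]
      ext k
      rw [hf (n+1) (by omega), hG]
      simp only [Nat.add_sub_cancel, map_add, PowerSeries.coeff_C_mul, PowerSeries.coeff_mk,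
        Polynomial.eval_mul, Polynomial.eval_add, Polynomial.eval_C, Polynomial.eval_X]
      ring
    -- derivative of P n
    have hdP : PowerSeries.derivativeFun ((P n : PowerSeries ℝ))
        = (1 - PowerSeries.X)^(n+1) * PowerSeries.derivativeFun G
          - ((n+1 : ℕ) : PowerSeries ℝ) * (1 - PowerSeries.X)^n * G := by
      rw [hPn, PowerSeries.derivativeFun_mul, deriv_one_sub_pow]
      simp only [smul_eq_mul]
      ring
    have key : (1 - PowerSeries.X)^(n+2) * PowerSeries.derivativeFun G
        = (1 - PowerSeries.X) * PowerSeries.derivativeFun ((P n : PowerSeries ℝ))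
          + ((n+1 : ℕ) : PowerSeries ℝ) * (P n : PowerSeries ℝ) := by
      rw [hdP, hPn]; ring
    -- the polynomial identity
    set Q : Polynomial ℝ := Polynomial.C a * Polynomial.X *
        ((1 - Polynomial.X) * Polynomial.derivative (P n)
          + Polynomial.C ((n+1 : ℕ) : ℝ) * P n)
      + Polynomial.C b * (1 - Polynomial.X) * P n with hQ
    have hcoe : ((P (n+1) : Polynomial ℝ) : PowerSeries ℝ) = (Q : PowerSeries ℝ) := by
      rw [hP (n+1), hmk, hQ]
      push_cast [Polynomial.coe_mul, Polynomial.coe_add, Polynomial.coe_sub, Polynomial.coe_one,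
        Polynomial.coe_X, Polynomial.coe_C, ← PowerSeries.derivativeFun_coe]
      have hC : ((PowerSeries.C) ((n:ℝ)+1)) = ((n : PowerSeries ℝ)+1) := by
        simp
      push_cast at key ⊢
      rw [hC]
      calc (1 - PowerSeries.X) ^ (n + 1 + 1) *
            (PowerSeries.C a * (PowerSeries.X * PowerSeries.derivativeFun G)
              + PowerSeries.C b * G)
          = PowerSeries.C a * PowerSeries.X *
              ((1 - PowerSeries.X)^(n+2) * PowerSeries.derivativeFun G)
            + PowerSeries.C b * (1 - PowerSeries.X) * ((1 - PowerSeries.X)^(n+1) * G) := by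
            ring
        _ = _ := by rw [key, ← hPn, show ∀ x : PowerSeries ℝ, PowerSeries.derivativeFun x = (d⁄dX ℝ) x from fun _ => rfl]; try ring
    rw [Polynomial.coe_inj] at hcoe
    rw [hcoe, hQ]
    simp only [Polynomial.eval_add, Polynomial.eval_mul, Polynomial.eval_C, Polynomial.eval_X,
      Polynomial.eval_sub, Polynomial.eval_one, sub_self, zero_mul, mul_zero, zero_add, add_zero,
      mul_one]
    rw [ih, Finset.prod_Icc_succ_top (Nat.le_add_left 1 n), Nat.factorial_succ]
    push_cast
    ring
end

section
/- For every integer n ≥ 1, Σ_{k=0}^{n−1} Π_{i=1}^{k} (2n−2i)/(2n−2i+1) = (2n+1)/3, where the empty product (k = 0) equals 1. -/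
/-- Bóna's identity: `Σ_{k=0}^{n-1} Π_{i=1}^{k} (2n-2i)/(2n-2i+1) = (2n+1)/3`. -/
theorem bona_identity (n : ℕ) (hn : 1 ≤ n) :
    ∑ k ∈ Finset.range n, ∏ i ∈ Finset.Icc 1 k,
        ((2 * (n : ℚ) - 2 * (i : ℚ)) / (2 * (n : ℚ) - 2 * (i : ℚ) + 1))
      = (2 * (n : ℚ) + 1) / 3 := by
  set P : ℕ → ℚ := fun k => ∏ i ∈ Finset.Icc 1 k,
      ((2 * (n : ℚ) - 2 * (i : ℚ)) / (2 * (n : ℚ) - 2 * (i : ℚ) + 1)) with hP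
  set f : ℕ → ℚ := fun k => (2 * (n : ℚ) - 2 * (k : ℚ) + 1) / 3 * P k with hf
  have key : ∀ k ∈ Finset.range n, P k = f k - f (k + 1) := by
    intro k hk
    rw [Finset.mem_range] at hk
    have hkq : (k : ℚ) + 1 ≤ (n : ℚ) := by exact_mod_cast hk
    have hsucc : P (k + 1) = P k *
        ((2 * (n : ℚ) - 2 * ((k + 1 : ℕ) : ℚ)) / (2 * (n : ℚ) - 2 * ((k + 1 : ℕ) : ℚ) + 1)) := by
      simp only [hP]
      rw [Finset.prod_Icc_succ_top (Nat.le_add_left 1 k)]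
    have hne : 2 * (n : ℚ) - 2 * ((k + 1 : ℕ) : ℚ) + 1 ≠ 0 := by
      push_cast
      nlinarith
    simp only [hf]
    push_cast at hsucc hne ⊢
    rw [hsucc]
    have h3 : ((2 * (n:ℚ) - 2 * (k + 1) + 1))⁻¹ * (2 * (n:ℚ) - 2 * (k + 1) + 1) = 1 := inv_mul_cancel₀ hne
    linear_combination (P k * (2 * (n:ℚ) - 2 * (k + 1)) / 3) * h3
  rw [Finset.sum_congr rfl key, Finset.sum_range_sub' f]
  have hPn : P n = 0 := by
    apply Finset.prod_eq_zero (Finset.mem_Icc.mpr ⟨hn, le_refl n⟩)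
    simp
  have hP0 : P 0 = 1 := by simp [hP]
  simp only [hf, hPn, hP0, mul_zero, sub_zero, mul_one, Nat.cast_zero]
end

section
/- Let L_{n,k} be the number of permutations of S_n whose longest alternating subsequence has length exactly k. Then for all n ≥ 1 and all k ≥ 0, L_{n+1,k} = k·L_{n,k} + L_{n,k−1} + (n − k + 2)·L_{n,k−2}, where terms with negative second index are interpreted as 0. -/
open Finset

/-- `AltChain b l` says that the list `l` is alternating, starting with a descent if
`b = true` (i.e. `l = [a₁, a₂, a₃, …]` with `a₁ > a₂ < a₃ > ⋯`) and starting with an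
ascent if `b = false`. -/
def AltChain {α : Type*} [LT α] : Bool → List α → Prop
  | _, [] => True
  | _, [_] => True
  | true, a :: b :: rest => b < a ∧ AltChain false (b :: rest)
  | false, a :: b :: rest => a < b ∧ AltChain true (b :: rest)

/-- The length of the longest alternating subsequence of the permutation `π`: the
largest `k` for which there are indices `i₁ < i₂ < ⋯ < i_k` with
`π(i₁) > π(i₂) < π(i₃) > ⋯` (alternating, starting with a descent). -/
noncomputable def las {n : ℕ} (π : Equiv.Perm (Fin n)) : ℕ :=
  sSup {k : ℕ | ∃ l : List (Fin n), l.Chain' (· < ·) ∧ l.length = k ∧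
    AltChain true (l.map π)}

open scoped Classical in
/-- `L_{n,k}`: the number of permutations of `S_n` whose longest alternating
subsequence has length exactly `k` (indexed by an integer `k`, so that terms with
negative index vanish automatically). -/
noncomputable def lasCount (n : ℕ) (k : ℤ) : ℕ :=
  (Finset.univ.filter (fun π : Equiv.Perm (Fin n) => (las π : ℤ) = k)).card


/-! ### Auxiliary development -/

section AltLenDev

open List

variable {α β : Type*} [LinearOrder α] [LinearOrder β]

def altLen : Bool → List α → ℕ
  | _, [] => 0
  | _, [_] => 1
  | true, a :: b :: t => if b < a then altLen false (b :: t) + 1 else altLen true (b :: t)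
  | false, a :: b :: t => if a < b then altLen true (b :: t) + 1 else altLen false (b :: t)

@[simp] lemma altLen_nil (b : Bool) : altLen b ([] : List α) = 0 := by cases b <;> rfl
@[simp] lemma altLen_singleton (b : Bool) (a : α) : altLen b [a] = 1 := by cases b <;> rfl

lemma altLen_true_cons_cons (a c : α) (t : List α) :
    altLen true (a :: c :: t) = if c < a then altLen false (c :: t) + 1 else altLen true (c :: t) := rfl

lemma altLen_false_cons_cons (a c : α) (t : List α) :
    altLen false (a :: c :: t) = if a < c then altLen true (c :: t) + 1 else altLen false (c :: t) := rfl

lemma altLen_pos (b : Bool) {l : List α} (hl : l ≠ []) : 1 ≤ altLen b l := by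
  induction l generalizing b with
  | nil => simp at hl
  | cons x t ih =>
    cases t with
    | nil => simp
    | cons y t' =>
      cases b
      · rw [altLen_false_cons_cons]
        split <;> [omega; exact ih false (by simp)]
      · rw [altLen_true_cons_cons]
        split <;> [omega; exact ih true (by simp)]

lemma altLen_le_length (b : Bool) (l : List α) : altLen b l ≤ l.length := by
  induction l generalizing b with
  | nil => simp
  | cons x t ih =>
    cases t with
    | nil => simp
    | cons y t' =>
      cases b
      · rw [altLen_false_cons_cons]
        split
        · have := ih true; simp only [List.length_cons] at *; omega
        · exact (ih false).trans (by simp)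
      · rw [altLen_true_cons_cons]
        split
        · have := ih false; simp only [List.length_cons] at *; omega
        · exact (ih true).trans (by simp)

lemma altLen_diff (l : List α) :
    altLen true l ≤ altLen false l + 1 ∧ altLen false l ≤ altLen true l + 1 := by
  induction l with
  | nil => simp
  | cons x t ih =>
    cases t with
    | nil => simp
    | cons y t' =>
      rw [altLen_true_cons_cons, altLen_false_cons_cons]
      rcases lt_trichotomy x y with h | h | h
      · rw [if_neg (asymm h), if_pos h]; omega
      · subst h; rw [if_neg (lt_irrefl x), if_neg (lt_irrefl x)]; omega
      · rw [if_pos h, if_neg (asymm h)]; omega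

lemma altLen_le_cons (b : Bool) (x : α) (l : List α) : altLen b l ≤ altLen b (x :: l) := by
  cases l with
  | nil => cases b <;> simp
  | cons y t =>
    cases b
    · rw [altLen_false_cons_cons]
      split
      · have := (altLen_diff (y :: t)).2; omega
      · exact le_rfl
    · rw [altLen_true_cons_cons]
      split
      · have := (altLen_diff (y :: t)).1; omega
      · exact le_rfl

lemma altLen_map (f : α → β) (hf : StrictMono f) (b : Bool) (l : List α) :
    altLen b (l.map f) = altLen b l := by
  induction l generalizing b with
  | nil => cases b <;> rfl
  | cons x t ih =>
    cases t with
    | nil => cases b <;> rfl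
    | cons y t' =>
      have h1 : (x :: y :: t').map f = f x :: f y :: t'.map f := rfl
      have h2 : (y :: t').map f = f y :: t'.map f := rfl
      cases b
      · rw [h1]
        show (if f x < f y then altLen true (f y :: t'.map f) + 1 else altLen false (f y :: t'.map f)) = _
        by_cases h : x < y
        · rw [if_pos (hf h), ← h2, ih true]; exact (if_pos h).symm
        · rw [if_neg (fun c => h (hf.lt_iff_lt.mp c)), ← h2, ih false]; exact (if_neg h).symm
      · rw [h1]
        show (if f y < f x then altLen false (f y :: t'.map f) + 1 else altLen true (f y :: t'.map f)) = _
        by_cases h : y < x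
        · rw [if_pos (hf h), ← h2, ih false]; exact (if_pos h).symm
        · rw [if_neg (fun c => h (hf.lt_iff_lt.mp c)), ← h2, ih true]; exact (if_neg h).symm


lemma length_le_altLen : ∀ (l s : List α) (b : Bool), s <+ l → AltChain b s →
    s.length ≤ altLen b l := by
  intro l
  induction l with
  | nil => intro s b hs _; simp [List.sublist_nil.mp hs]
  | cons x t ihl =>
    intro s b hs halt
    cases s with
    | nil => simp
    | cons a s' =>
      rcases List.cons_sublist_cons'.mp hs with h | ⟨rfl, hs'⟩
      · refine (ihl _ b ?_ halt).trans (altLen_le_cons b x t)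
        -- h : a :: s' <+ t
        exact h
      · -- s = a :: s', s' <+ t
        cases t with
        | nil => simp [List.sublist_nil.mp hs', altLen]
        | cons y t' =>
          cases s' with
          | nil =>
            simpa using altLen_pos b (l := a :: y :: t') (by simp)
          | cons z s'' =>
            cases b
            · -- AltChain false (x :: z :: s'')
              obtain ⟨hxz, halt'⟩ : a < z ∧ AltChain true (z :: s'') := halt
              by_cases h : a < y
              · -- altLen false (x::y::t') = altLen true (y::t') + 1
                have := ihl (z :: s'') true hs' halt'
                rw [show altLen false (a :: y :: t') =
                  altLen true (y :: t') + 1 from if_pos h]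
                simp only [List.length_cons] at *
                omega
              · -- y ≤ a < z, so z ≠ y, z :: s'' <+ t'
                have hyx : y ≤ a := not_lt.mp h
                have hzt : z :: s'' <+ t' := by
                  rcases List.cons_sublist_cons'.mp hs' with h2 | ⟨rfl, _⟩
                  · exact h2
                  · exact absurd hxz (not_lt.mpr hyx)
                have hsub2 : y :: z :: s'' <+ y :: t' := List.cons_sublist_cons.mpr hzt
                have halt2 : AltChain false (y :: z :: s'') :=
                  ⟨lt_of_le_of_lt hyx hxz, halt'⟩
                have := ihl (y :: z :: s'') false hsub2 halt2
                rw [show altLen false (a :: y :: t') = altLen false (y :: t') from if_neg h]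
                simpa using this
            · obtain ⟨hzx, halt'⟩ : z < a ∧ AltChain false (z :: s'') := halt
              by_cases h : y < a
              · have := ihl (z :: s'') false hs' halt'
                rw [show altLen true (a :: y :: t') =
                  altLen false (y :: t') + 1 from if_pos h]
                simp only [List.length_cons] at *
                omega
              · have hxy : a ≤ y := not_lt.mp h
                have hzt : z :: s'' <+ t' := by
                  rcases List.cons_sublist_cons'.mp hs' with h2 | ⟨rfl, _⟩
                  · exact h2
                  · exact absurd hzx h
                have hsub2 : y :: z :: s'' <+ y :: t' := List.cons_sublist_cons.mpr hzt
                have halt2 : AltChain true (y :: z :: s'') :=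
                  ⟨lt_of_lt_of_le hzx hxy, halt'⟩
                have := ihl (y :: z :: s'') true hsub2 halt2
                rw [show altLen true (a :: y :: t') = altLen true (y :: t') from if_neg h]
                simpa using this

lemma exists_opt : ∀ (t : List α) (x : α) (b : Bool), ∃ z s, (z :: s) <+ (x :: t) ∧
    AltChain b (z :: s) ∧ (z :: s).length = altLen b (x :: t) ∧
    (b = true → x ≤ z) ∧ (b = false → z ≤ x) := by
  intro t
  induction t with
  | nil =>
    intro x b
    exact ⟨x, [], List.Sublist.refl _, by cases b <;> trivial, by cases b <;> rfl, fun _ => le_rfl, fun _ => le_rfl⟩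
  | cons y t' ih =>
    intro x b
    cases b
    · by_cases h : x < y
      · obtain ⟨z, s, hsub, halt, hlen, hz, -⟩ := ih y true
        refine ⟨x, z :: s, List.cons_sublist_cons.mpr hsub, ⟨lt_of_lt_of_le h (hz rfl), halt⟩,
          ?_, by simp, fun _ => le_rfl⟩
        rw [show altLen false (x :: y :: t') = altLen true (y :: t') + 1 from if_pos h]
        simpa using hlen
      · obtain ⟨z, s, hsub, halt, hlen, -, hz⟩ := ih y false
        refine ⟨z, s, hsub.cons x, halt, ?_, by simp, fun _ => (hz rfl).trans (not_lt.mp h)⟩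
        rwa [show altLen false (x :: y :: t') = altLen false (y :: t') from if_neg h]
    · by_cases h : y < x
      · obtain ⟨z, s, hsub, halt, hlen, -, hz⟩ := ih y false
        refine ⟨x, z :: s, List.cons_sublist_cons.mpr hsub, ⟨lt_of_le_of_lt (hz rfl) h, halt⟩,
          ?_, fun _ => le_rfl, by simp⟩
        rw [show altLen true (x :: y :: t') = altLen false (y :: t') + 1 from if_pos h]
        simpa using hlen
      · obtain ⟨z, s, hsub, halt, hlen, hz, -⟩ := ih y true
        refine ⟨z, s, hsub.cons x, halt, ?_, fun _ => (not_lt.mp h).trans (hz rfl), by simp⟩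
        rwa [show altLen true (x :: y :: t') = altLen true (y :: t') from if_neg h]



lemma altLen_true_max_cons (M y : α) (t' : List α) (hy : y < M) :
    altLen true (M :: y :: t') = altLen false (y :: t') + 1 := if_pos hy

lemma altLen_false_max_cons (M y : α) (t' : List α) (hy : y < M) :
    altLen false (M :: y :: t') = altLen false (y :: t') := if_neg (asymm hy)

lemma ms_cons_rep (m k : ℕ) (B C : Multiset ℕ) :
    m ::ₘ (Multiset.replicate k m + B + C) = Multiset.replicate (k + 1) m + B + C := by
  rw [Multiset.replicate_succ, Multiset.cons_add, Multiset.cons_add]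

lemma ms_add_cons (c : ℕ) (A B C : Multiset ℕ) :
    A + B + (c ::ₘ C) = c ::ₘ (A + B + C) := by
  rw [Multiset.add_cons]

lemma altLen_insertIdx (M : α) : ∀ (l : List α), l ≠ [] → l.Chain' (· ≠ ·) →
    (∀ x ∈ l, x < M) → ∀ b : Bool,
    Multiset.map (fun j => altLen b (l.insertIdx j M)) ↑(List.range (l.length + 1))
      = Multiset.replicate (altLen b l) (altLen b l) + {altLen b l + 1}
        + Multiset.replicate (l.length - altLen b l) (altLen b l + 2) := by
  intro l
  induction l with
  | nil => intro h; cases h rfl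
  | cons x t ih =>
    intro _ hchain hM b
    have hxM : x < M := hM x List.mem_cons_self
    have hsplit : Multiset.map (fun j => altLen b ((x :: t).insertIdx j M))
        ↑(List.range ((x :: t).length + 1))
        = altLen b (M :: x :: t) ::ₘ
          Multiset.map (fun j => altLen b (x :: t.insertIdx j M)) ↑(List.range (t.length + 1)) := by
      have : (x :: t).length + 1 = (t.length + 1) + 1 := by simp
      rw [this, List.range_succ_eq_map]
      simp only [Multiset.map_coe, List.map_cons, List.map_map, Multiset.cons_coe]
      rfl
    rw [hsplit]
    cases t with
    | nil =>
      -- l = [x]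
      have h0 : ∀ b : Bool, Multiset.map (fun j => altLen b (x :: ([] : List α).insertIdx j M))
          ↑(List.range (([] : List α).length + 1)) = {altLen b [x, M]} := by
        intro b; rfl
      cases b
      · rw [h0]
        have h1 : altLen false [M, x] = 1 := if_neg (asymm hxM)
        have h2 : altLen false [x, M] = 2 := by
          rw [show altLen false [x, M] = altLen true [M] + 1 from if_pos hxM]; rfl
        rw [h1, h2]
        show (1 ::ₘ {2} : Multiset ℕ) = _
        simp [Multiset.replicate_one, ← Multiset.singleton_add]
      · rw [h0]
        have h1 : altLen true [M, x] = 2 := by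
          rw [show altLen true [M, x] = altLen false [x] + 1 from if_pos hxM]; rfl
        have h2 : altLen true [x, M] = 1 := by
          rw [show altLen true [x, M] = altLen true [M] from if_neg (asymm hxM)]; rfl
        rw [h1, h2]
        show (2 ::ₘ 1 ::ₘ 0 : Multiset ℕ) = _
        rw [Multiset.cons_swap]
        simp [Multiset.replicate_one, ← Multiset.singleton_add]
    | cons y t' =>
      have hyM : y < M := hM y (by simp)
      have hxy : x ≠ y := (List.isChain_cons_cons.mp hchain).1
      have hcht : (y :: t').Chain' (· ≠ ·) := (List.isChain_cons_cons.mp hchain).2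
      have hMt : ∀ z ∈ y :: t', z < M := fun z hz => hM z (List.mem_cons_of_mem _ hz)
      have hlen_t := altLen_le_length true (y :: t')
      have hlen_f := altLen_le_length false (y :: t')
      set n' := (y :: t').length with hn'
      cases b
      · -- b = false
        rcases hxy.lt_or_gt with hxlty | hyltx
        · -- x < y : uniform +1 over altLen true
          have huni : ∀ j, altLen false (x :: (y :: t').insertIdx j M)
              = altLen true ((y :: t').insertIdx j M) + 1 := by
            intro j
            cases j with
            | zero =>
              rw [List.insertIdx_zero]
              exact if_pos hxM
            | succ j => exact if_pos hxlty
          have hm : altLen false (x :: y :: t') = altLen true (y :: t') + 1 := if_pos hxlty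
          have hhead : altLen false (M :: x :: y :: t') = altLen true (y :: t') + 1 := by
            rw [altLen_false_cons_cons, if_neg (asymm hxM), hm]
          simp only [huni, hhead, hm]
          rw [show (Multiset.map (fun j => altLen true ((y :: t').insertIdx j M) + 1)
                ↑(List.range (n' + 1)))
              = Multiset.map (· + 1) (Multiset.map
                (fun j => altLen true ((y :: t').insertIdx j M)) ↑(List.range (n' + 1))) by
            rw [Multiset.map_map]; rfl]
          rw [ih (by simp) hcht hMt true]
          set a := altLen true (y :: t')
          simp only [Multiset.map_add, Multiset.map_replicate, Multiset.map_singleton]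
          rw [show (x :: y :: t').length - (a + 1) = n' - a by simp only [List.length_cons] at *; omega]
          exact ms_cons_rep _ _ _ _
        · -- y < x : head ::ₘ (m+2) ::ₘ rest trick
          have hm : altLen false (x :: y :: t') = altLen false (y :: t') := if_neg (asymm hyltx)
          have hhead : altLen false (M :: x :: y :: t') = altLen false (y :: t') := by
            rw [altLen_false_cons_cons, if_neg (asymm hxM), hm]
          have hg0 : altLen false (x :: (y :: t').insertIdx 0 M)
              = altLen false (y :: t') + 2 := by
            rw [List.insertIdx_zero,
              show altLen false (x :: M :: y :: t') = altLen true (M :: y :: t') + 1 from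
                if_pos hxM,
              altLen_true_max_cons M y t' hyM]
          have hgs : ∀ j, altLen false (x :: (y :: t').insertIdx (j + 1) M)
              = altLen false ((y :: t').insertIdx (j + 1) M) := by
            intro j
            exact if_neg (asymm hyltx)
          have hh0 : altLen false ((y :: t').insertIdx 0 M) = altLen false (y :: t') := by
            rw [List.insertIdx_zero]; exact altLen_false_max_cons M y t' hyM
          -- decompose the range on both sides
          have hdec : ∀ (g : ℕ → ℕ), Multiset.map g ↑(List.range (n' + 1))
              = g 0 ::ₘ Multiset.map (fun j => g (j + 1)) ↑(List.range n') := by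
            intro g
            rw [List.range_succ_eq_map]
            simp only [Multiset.map_coe, List.map_cons, List.map_map, Multiset.cons_coe]
            rfl
          rw [hdec, hg0]
          have hIH := ih (by simp) hcht hMt false
          rw [hdec] at hIH
          rw [hh0] at hIH
          have hrest : Multiset.map (fun j => altLen false (x :: (y :: t').insertIdx (j + 1) M))
              ↑(List.range n')
              = Multiset.map (fun j => altLen false ((y :: t').insertIdx (j + 1) M))
              ↑(List.range n') := by
            simp only [hgs]
          rw [hrest, hhead, hm]
          set a := altLen false (y :: t')
          -- now: a+2 ::ₘ a ::ₘ X = target, where a ::ₘ X = replicate a a + {a+1} + replicate (n'-a) (a+2)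
          rw [Multiset.cons_swap, hIH]
          rw [show (x :: y :: t').length - a = (n' - a) + 1 by simp only [List.length_cons] at *; omega]
          rw [Multiset.replicate_succ]
          exact (ms_add_cons _ _ _ _).symm
      · -- b = true (mirror)
        rcases hxy.lt_or_gt with hxlty | hyltx
        · -- x < y : uniform identity over altLen true
          have huni : ∀ j, altLen true (x :: (y :: t').insertIdx j M)
              = altLen true ((y :: t').insertIdx j M) := by
            intro j
            cases j with
            | zero =>
              rw [List.insertIdx_zero]
              exact if_neg (asymm hxM)
            | succ j => exact if_neg (asymm hxlty)
          have hm : altLen true (x :: y :: t') = altLen true (y :: t') := if_neg (asymm hxlty)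
          have hhead : altLen true (M :: x :: y :: t') = altLen true (y :: t') + 2 := by
            rw [show altLen true (M :: x :: y :: t') = altLen false (x :: y :: t') + 1 from
              if_pos hxM, show altLen false (x :: y :: t') = altLen true (y :: t') + 1 from
              if_pos hxlty]
          simp only [huni, hhead, hm]
          rw [ih (by simp) hcht hMt true]
          set a := altLen true (y :: t')
          rw [show (x :: y :: t').length - a = (n' - a) + 1 by simp only [List.length_cons] at *; omega]
          rw [Multiset.replicate_succ]
          exact (ms_add_cons _ _ _ _).symm
        · -- y < x : uniform +1 over altLen false
          have huni : ∀ j, altLen true (x :: (y :: t').insertIdx j M)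
              = altLen false ((y :: t').insertIdx j M) + 1 := by
            intro j
            cases j with
            | zero =>
              rw [List.insertIdx_zero,
                show altLen true (x :: M :: y :: t') = altLen true (M :: y :: t') from
                  if_neg (asymm hxM),
                altLen_true_max_cons M y t' hyM, altLen_false_max_cons M y t' hyM]
            | succ j => exact if_pos hyltx
          have hm : altLen true (x :: y :: t') = altLen false (y :: t') + 1 := if_pos hyltx
          have hhead : altLen true (M :: x :: y :: t') = altLen false (y :: t') + 1 := by
            rw [show altLen true (M :: x :: y :: t') = altLen false (x :: y :: t') + 1 from
              if_pos hxM, show altLen false (x :: y :: t') = altLen false (y :: t') from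
              if_neg (asymm hyltx)]
          simp only [huni, hhead, hm]
          rw [show (Multiset.map (fun j => altLen false ((y :: t').insertIdx j M) + 1)
                ↑(List.range (n' + 1)))
              = Multiset.map (· + 1) (Multiset.map
                (fun j => altLen false ((y :: t').insertIdx j M)) ↑(List.range (n' + 1))) by
            rw [Multiset.map_map]; rfl]
          rw [ih (by simp) hcht hMt false]
          set a := altLen false (y :: t')
          simp only [Multiset.map_add, Multiset.map_replicate, Multiset.map_singleton]
          rw [show (x :: y :: t').length - (a + 1) = n' - a by simp only [List.length_cons] at *; omega]
          exact ms_cons_rep _ _ _ _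



lemma las_eq {n : ℕ} (hn : 0 < n) (π : Equiv.Perm (Fin n)) :
    las π = altLen true ((List.finRange n).map π) := by
  have hL : (List.finRange n).map π ≠ [] := by
    simp only [ne_eq, List.map_eq_nil_iff]
    intro h
    have := List.length_finRange (n := n)
    rw [h] at this
    simp at this
    omega
  apply IsGreatest.csSup_eq
  constructor
  · obtain ⟨x, t, hxt⟩ := List.exists_cons_of_ne_nil hL
    obtain ⟨z, s, hsub, halt, hlen, -, -⟩ := exists_opt t x true
    rw [← hxt] at hsub hlen
    obtain ⟨l', hl', heq⟩ := List.sublist_map_iff.mp hsub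
    refine ⟨l', ?_, ?_, ?_⟩
    · exact List.isChain_iff_pairwise.mpr (List.Pairwise.sublist hl' (List.pairwise_lt_finRange n))
    · have hl'' := congrArg List.length heq
      rw [List.length_map] at hl''
      omega
    · rw [← heq]; exact halt
  · rintro k ⟨l, hchain, rfl, halt⟩
    have hpl : l.Pairwise (· < ·) := List.isChain_iff_pairwise.mp hchain
    have hsub : l <+ List.finRange n := by
      haveI : IsAntisymm (Fin n) (· < ·) := ⟨fun a b h h' => absurd h' (asymm h)⟩
      refine List.sublist_of_subperm_of_pairwise ?_ hpl (List.pairwise_lt_finRange n)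
      exact List.Nodup.subperm (List.Pairwise.imp ne_of_lt hpl) (fun a _ => List.mem_finRange a)
    calc l.length = (l.map π).length := (List.length_map (as := l) π).symm
    _ ≤ altLen true ((List.finRange n).map π) := length_le_altLen _ _ true (hsub.map π) halt

lemma las_le {n : ℕ} (hn : 0 < n) (π : Equiv.Perm (Fin n)) : las π ≤ n := by
  rw [las_eq hn]
  have := altLen_le_length true ((List.finRange n).map π)
  simpa using this

noncomputable def insPerm {n : ℕ} (σ : Equiv.Perm (Fin n)) (j : Fin (n + 1)) :
    Equiv.Perm (Fin (n + 1)) :=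
  ((finSuccEquiv' j).trans (Equiv.optionCongr σ)).trans finSuccEquivLast.symm

lemma insPerm_self {n : ℕ} (σ : Equiv.Perm (Fin n)) (j : Fin (n + 1)) :
    insPerm σ j j = Fin.last n := by
  simp [insPerm]

lemma insPerm_succAbove {n : ℕ} (σ : Equiv.Perm (Fin n)) (j : Fin (n + 1)) (i : Fin n) :
    insPerm σ j (j.succAbove i) = (σ i).castSucc := by
  simp [insPerm]

lemma insPerm_apply_of_lt {n : ℕ} (σ : Equiv.Perm (Fin n)) (j : Fin (n + 1))
    (v : Fin (n + 1)) (h : (v : ℕ) < (j : ℕ)) :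
    insPerm σ j v = (σ ⟨(v : ℕ), lt_of_lt_of_le h (Fin.is_le j)⟩).castSucc := by
  have hv : v = j.succAbove ⟨(v : ℕ), lt_of_lt_of_le h (Fin.is_le j)⟩ := by
    rw [Fin.succAbove_of_castSucc_lt]
    · exact (Fin.ext rfl)
    · simp only [Fin.lt_def, Fin.coe_castSucc]
      exact h
  conv_lhs => rw [hv]
  rw [insPerm_succAbove]

lemma insPerm_apply_of_gt {n : ℕ} (σ : Equiv.Perm (Fin n)) (j : Fin (n + 1))
    (v : Fin (n + 1)) (h : (j : ℕ) < (v : ℕ)) :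
    insPerm σ j v = (σ ⟨(v : ℕ) - 1, by have := v.isLt; omega⟩).castSucc := by
  have hv : v = j.succAbove ⟨(v : ℕ) - 1, by have := v.isLt; omega⟩ := by
    rw [Fin.succAbove_of_le_castSucc]
    · apply Fin.ext
      have := v.isLt
      simp only [Fin.val_succ]
      omega
    · simp only [Fin.le_def, Fin.coe_castSucc]
      omega
  conv_lhs => rw [hv]
  rw [insPerm_succAbove]

lemma insPerm_list {n : ℕ} (σ : Equiv.Perm (Fin n)) (j : Fin (n + 1)) :
    (List.finRange (n + 1)).map (insPerm σ j)
      = ((List.finRange n).map (fun i => (σ i).castSucc)).insertIdx (j : ℕ) (Fin.last n) := by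
  have hjle : (j : ℕ) ≤ ((List.finRange n).map (fun i => (σ i).castSucc)).length := by
    simp [Fin.is_le j]
  apply List.ext_getElem
  · rw [List.length_insertIdx_of_le_length hjle]
    simp
  intro i h1 h2
  rw [List.getElem_map, List.getElem_finRange]
  rcases lt_trichotomy i (j : ℕ) with h | h | h
  · have hi : i < n := lt_of_lt_of_le h (Fin.is_le j)
    rw [List.getElem_insertIdx_of_lt h]
    rw [List.getElem_map, List.getElem_finRange]
    exact insPerm_apply_of_lt σ j _ h
  · subst h
    rw [List.getElem_insertIdx_self]
    convert insPerm_self σ j using 2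
    exact Fin.ext rfl
  · obtain ⟨d, rfl⟩ : ∃ d, i = (j : ℕ) + d + 1 := ⟨i - j - 1, by omega⟩
    have hd : (j : ℕ) + d < n := by
      rw [List.length_map, List.length_finRange] at h1
      omega
    rw [List.getElem_insertIdx_of_gt (by omega)]
    rw [List.getElem_map, List.getElem_finRange]
    exact insPerm_apply_of_gt σ j _ (by simp only [Fin.coe_cast]; omega)

lemma insPerm_bijective (n : ℕ) :
    Function.Bijective (fun p : Equiv.Perm (Fin n) × Fin (n + 1) => insPerm p.1 p.2) := by
  rw [Fintype.bijective_iff_injective_and_card]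
  constructor
  · rintro ⟨σ, j⟩ ⟨σ', j'⟩ h
    simp only at h
    have hj : j' = j := by
      apply (insPerm σ j).injective
      rw [insPerm_self, h, insPerm_self]
    subst hj
    have hσ : σ = σ' := by
      apply Equiv.ext
      intro i
      apply Fin.castSucc_injective
      rw [← insPerm_succAbove σ j' i, ← insPerm_succAbove σ' j' i, h]
    rw [hσ]
  · simp [Fintype.card_perm, Fintype.card_prod, Nat.factorial_succ, mul_comm]


lemma count_ins {n : ℕ} (hn : 1 ≤ n) (σ : Equiv.Perm (Fin n)) (v : ℕ) :
    (Finset.univ.filter (fun j : Fin (n + 1) => v = las (insPerm σ j))).card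
      = (if v = las σ then las σ else 0) + (if v = las σ + 1 then 1 else 0)
        + (if v = las σ + 2 then n - las σ else 0) := by
  classical
  set L : List (Fin (n + 1)) := (List.finRange n).map (fun i => (σ i).castSucc) with hLdef
  have hLlen : L.length = n := by simp [hLdef]
  have hlasins : ∀ j : Fin (n + 1),
      las (insPerm σ j) = altLen true (L.insertIdx (j : ℕ) (Fin.last n)) := by
    intro j
    rw [las_eq (by omega : 0 < n + 1), insPerm_list]
  have hLalt : altLen true L = las σ := by
    rw [las_eq (by omega : 0 < n) σ]
    have hh : L = ((List.finRange n).map σ).map Fin.castSucc := by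
      rw [hLdef, List.map_map]
      rfl
    rw [hh, altLen_map _ Fin.strictMono_castSucc true]
  have hnodup : L.Pairwise (· ≠ ·) := by
    apply List.Nodup.map
    · exact fun a b hab => σ.injective (Fin.castSucc_injective n hab)
    · exact List.nodup_finRange n
  have hchain : L.Chain' (· ≠ ·) := hnodup.isChain
  have hmax : ∀ x ∈ L, x < Fin.last n := by
    intro x hx
    rw [hLdef] at hx
    obtain ⟨i, -, rfl⟩ := List.mem_map.mp hx
    exact Fin.castSucc_lt_last _
  have hne : L ≠ [] := by
    intro h
    rw [h] at hLlen
    simp at hLlen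
    omega
  have hkey := altLen_insertIdx (Fin.last n) L hne hchain hmax true
  rw [hLalt, hLlen] at hkey
  set h : ℕ → ℕ := fun j' => altLen true (L.insertIdx j' (Fin.last n)) with hhdef
  have h1 : (Finset.univ.filter (fun j : Fin (n + 1) => v = las (insPerm σ j))).card
      = Multiset.count v (Multiset.map h ↑(List.range (n + 1))) := by
    rw [Finset.card_filter]
    have he : ∀ j : Fin (n + 1), (if v = las (insPerm σ j) then 1 else 0)
        = (fun j' : ℕ => if v = h j' then 1 else 0) (j : ℕ) := by
      intro j
      simp only [hlasins j, hhdef]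
    rw [Finset.sum_congr rfl fun j _ => he j, Fin.sum_univ_eq_sum_range
      (fun j' => if v = h j' then 1 else 0) (n + 1), ← Finset.card_filter]
    rw [Finset.card_def, Finset.filter_val, ← Multiset.countP_eq_card_filter,
      Finset.range_val, ← Multiset.coe_range, Multiset.count_map]
    exact Multiset.countP_eq_card_filter (p := fun a => v = h a) (↑(List.range (n + 1)))
  rw [h1, hkey]
  rw [Multiset.count_add, Multiset.count_add, Multiset.count_replicate,
    Multiset.count_replicate, Multiset.count_singleton]
  split_ifs <;> omega

end AltLenDev

/-- The recurrence `L_{n+1,k} = k L_{n,k} + L_{n,k-1} + (n-k+2) L_{n,k-2}`. -/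
theorem las_recurrence (n : ℕ) (hn : 1 ≤ n) (k : ℤ) (hk : 0 ≤ k) :
    (lasCount (n + 1) k : ℤ)
      = k * lasCount n k + lasCount n (k - 1) + ((n : ℤ) - k + 2) * lasCount n (k - 2) := by
  classical
  have hk' : ((k.toNat : ℕ) : ℤ) = k := Int.toNat_of_nonneg hk
  set k' := k.toNat with hk'def
  -- Step 1: transfer the count over `S_{n+1}` to a sum over `S_n × Fin (n+1)`.
  have h1 : lasCount (n + 1) k = ∑ σ : Equiv.Perm (Fin n),
      (Finset.univ.filter (fun j : Fin (n + 1) => k' = las (insPerm σ j))).card := by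
    have hstep1 : lasCount (n + 1) k
        = (Finset.univ.filter (fun π : Equiv.Perm (Fin (n + 1)) => k' = las π)).card := by
      unfold lasCount
      congr 1
      apply Finset.filter_congr
      intro π _
      constructor
      · intro hp
        have : ((las π : ℕ) : ℤ) = ((k' : ℕ) : ℤ) := by rw [hp, hk']
        exact (Nat.cast_inj.mp this).symm
      · intro hp
        rw [← hp, hk']
    have hbij := insPerm_bijective n
    have hstep2 : (Finset.univ.filter (fun π : Equiv.Perm (Fin (n + 1)) => k' = las π)).card
        = (Finset.univ.filter
            (fun p : Equiv.Perm (Fin n) × Fin (n + 1) => k' = las (insPerm p.1 p.2))).card := by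
      apply Finset.card_bij (fun (p : Equiv.Perm (Fin n) × Fin (n + 1)) _ => insPerm p.1 p.2)
        ?_ ?_ ?_ |>.symm
      · intro p hp
        simp only [Finset.mem_filter, Finset.mem_univ, true_and] at hp ⊢
        exact hp
      · intro p _ q _ hpq
        exact hbij.1 hpq
      · intro π hπ
        obtain ⟨p, rfl⟩ := hbij.2 π
        refine ⟨p, ?_, rfl⟩
        simpa using hπ
    rw [hstep1, hstep2, Finset.card_filter, Fintype.sum_prod_type]
    exact Finset.sum_congr rfl fun σ _ => (Finset.card_filter _ _).symm
  -- Step 2: per-σ counting, in ℤ.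
  have h2 : ∀ σ : Equiv.Perm (Fin n),
      (((Finset.univ.filter (fun j : Fin (n + 1) => k' = las (insPerm σ j))).card : ℤ))
        = (if (las σ : ℤ) = k then (k : ℤ) else 0)
          + (if (las σ : ℤ) = k - 1 then 1 else 0)
          + (if (las σ : ℤ) = k - 2 then (n : ℤ) - k + 2 else 0) := by
    intro σ
    rw [count_ins hn σ k']
    have hle := las_le (by omega : 0 < n) σ
    push_cast [apply_ite (fun m : ℕ => (m : ℤ))]
    split_ifs <;> omega
  -- Step 3: sum everything.
  calc (lasCount (n + 1) k : ℤ)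
      = ∑ σ : Equiv.Perm (Fin n),
          (((Finset.univ.filter (fun j : Fin (n + 1) => k' = las (insPerm σ j))).card : ℤ)) := by
        rw [h1]; push_cast; rfl
    _ = ∑ σ : Equiv.Perm (Fin n),
          ((if (las σ : ℤ) = k then (k : ℤ) else 0)
            + (if (las σ : ℤ) = k - 1 then 1 else 0)
            + (if (las σ : ℤ) = k - 2 then (n : ℤ) - k + 2 else 0)) :=
        Finset.sum_congr rfl fun σ _ => h2 σ
    _ = k * lasCount n k + lasCount n (k - 1) + ((n : ℤ) - k + 2) * lasCount n (k - 2) := by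
        rw [Finset.sum_add_distrib, Finset.sum_add_distrib]
        congr 1
        · congr 1
          · rw [← Finset.sum_filter, Finset.sum_const, nsmul_eq_mul]
            unfold lasCount
            rw [mul_comm]
          · rw [← Finset.sum_filter, Finset.sum_const, nsmul_eq_mul, mul_one]
            unfold lasCount
            congr 1
        · rw [← Finset.sum_filter, Finset.sum_const, nsmul_eq_mul]
          unfold lasCount
          rw [mul_comm]
end

section
/- Let J_{2n,k} be the number of fixed-point-free involutions of S_{2n} with exactly k descents. Then for all sufficiently large n, the sequence (J_{2n,k})_{k≥0} is not log-concave; that is, there exists N such that for every n ≥ N there exists k ≥ 1 with J_{2n,k}² < J_{2n,k−1} · J_{2n,k+1}. -/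
open Finset

/-- The value of `π` at (0-indexed) position `j`, or `0` if `j` is out of range. -/
def permVal {n : ℕ} (π : Equiv.Perm (Fin n)) (j : ℕ) : ℕ :=
  if h : j < n then (π ⟨j, h⟩ : ℕ) else 0

/-- The number of descents of a permutation of `n` elements: the number of positions
`i` (0-indexed, `i < n - 1`) with `π i > π (i+1)`. -/
def des {n : ℕ} (π : Equiv.Perm (Fin n)) : ℕ :=
  ((Finset.range (n - 1)).filter (fun i => permVal π (i + 1) < permVal π i)).card

/-- `J_{2n,k}`: the number of fixed-point-free involutions of `S_{2n}` with exactly `k`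
descents. -/
def matchingDes (n : ℕ) (k : ℕ) : ℕ :=
  (Finset.univ.filter (fun π : Equiv.Perm (Fin (2 * n)) =>
    π * π = 1 ∧ (∀ i, π i ≠ i) ∧ des π = k)).card

set_option maxHeartbeats 1000000

def g6 (a b c d e f i : ℕ) : ℕ :=
  if i < a then (a+b+c) + (i - (0))
  else if i < a+b then (2*a+b+c+d+e) + (i - (a))
  else if i < a+b+c then (2*a+2*b+c+2*d+e+f) + (i - (a+b))
  else if i < 2*a+b+c then (0) + (i - (a+b+c))
  else if i < 2*a+b+c+d then (2*a+2*b+c+d+e) + (i - (2*a+b+c))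
  else if i < 2*a+b+c+d+e then (2*a+2*b+2*c+2*d+e+f) + (i - (2*a+b+c+d))
  else if i < 2*a+2*b+c+d+e then (a) + (i - (2*a+b+c+d+e))
  else if i < 2*a+2*b+c+2*d+e then (2*a+b+c) + (i - (2*a+2*b+c+d+e))
  else if i < 2*a+2*b+c+2*d+e+f then (2*a+2*b+2*c+2*d+2*e+f) + (i - (2*a+2*b+c+2*d+e))
  else if i < 2*a+2*b+2*c+2*d+e+f then (a+b) + (i - (2*a+2*b+c+2*d+e+f))
  else if i < 2*a+2*b+2*c+2*d+2*e+f then (2*a+b+c+d) + (i - (2*a+2*b+2*c+2*d+e+f))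
  else (2*a+2*b+c+2*d+e) + (i - (2*a+2*b+2*c+2*d+2*e+f))

variable {a b c d e f i : ℕ}

lemma g6w1 (_h1 : 0 ≤ i) (_h2 : i < a) :
    g6 a b c d e f i = (a+b+c) + (i - (0)) := by
  unfold g6
  rw [if_pos (by omega)]

lemma g6w2 (_h1 : a ≤ i) (_h2 : i < a+b) :
    g6 a b c d e f i = (2*a+b+c+d+e) + (i - (a)) := by
  unfold g6
  rw [if_neg (by omega)]
  rw [if_pos (by omega)]

lemma g6w3 (_h1 : a+b ≤ i) (_h2 : i < a+b+c) :
    g6 a b c d e f i = (2*a+2*b+c+2*d+e+f) + (i - (a+b)) := by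
  unfold g6
  rw [if_neg (by omega)]
  rw [if_neg (by omega)]
  rw [if_pos (by omega)]

lemma g6w4 (_h1 : a+b+c ≤ i) (_h2 : i < 2*a+b+c) :
    g6 a b c d e f i = (0) + (i - (a+b+c)) := by
  unfold g6
  rw [if_neg (by omega)]
  rw [if_neg (by omega)]
  rw [if_neg (by omega)]
  rw [if_pos (by omega)]

lemma g6w5 (_h1 : 2*a+b+c ≤ i) (_h2 : i < 2*a+b+c+d) :
    g6 a b c d e f i = (2*a+2*b+c+d+e) + (i - (2*a+b+c)) := by
  unfold g6
  rw [if_neg (by omega)]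
  rw [if_neg (by omega)]
  rw [if_neg (by omega)]
  rw [if_neg (by omega)]
  rw [if_pos (by omega)]

lemma g6w6 (_h1 : 2*a+b+c+d ≤ i) (_h2 : i < 2*a+b+c+d+e) :
    g6 a b c d e f i = (2*a+2*b+2*c+2*d+e+f) + (i - (2*a+b+c+d)) := by
  unfold g6
  rw [if_neg (by omega)]
  rw [if_neg (by omega)]
  rw [if_neg (by omega)]
  rw [if_neg (by omega)]
  rw [if_neg (by omega)]
  rw [if_pos (by omega)]

lemma g6w7 (_h1 : 2*a+b+c+d+e ≤ i) (_h2 : i < 2*a+2*b+c+d+e) :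
    g6 a b c d e f i = (a) + (i - (2*a+b+c+d+e)) := by
  unfold g6
  rw [if_neg (by omega)]
  rw [if_neg (by omega)]
  rw [if_neg (by omega)]
  rw [if_neg (by omega)]
  rw [if_neg (by omega)]
  rw [if_neg (by omega)]
  rw [if_pos (by omega)]

lemma g6w8 (_h1 : 2*a+2*b+c+d+e ≤ i) (_h2 : i < 2*a+2*b+c+2*d+e) :
    g6 a b c d e f i = (2*a+b+c) + (i - (2*a+2*b+c+d+e)) := by
  unfold g6
  rw [if_neg (by omega)]
  rw [if_neg (by omega)]
  rw [if_neg (by omega)]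
  rw [if_neg (by omega)]
  rw [if_neg (by omega)]
  rw [if_neg (by omega)]
  rw [if_neg (by omega)]
  rw [if_pos (by omega)]

lemma g6w9 (_h1 : 2*a+2*b+c+2*d+e ≤ i) (_h2 : i < 2*a+2*b+c+2*d+e+f) :
    g6 a b c d e f i = (2*a+2*b+2*c+2*d+2*e+f) + (i - (2*a+2*b+c+2*d+e)) := by
  unfold g6
  rw [if_neg (by omega)]
  rw [if_neg (by omega)]
  rw [if_neg (by omega)]
  rw [if_neg (by omega)]
  rw [if_neg (by omega)]
  rw [if_neg (by omega)]
  rw [if_neg (by omega)]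
  rw [if_neg (by omega)]
  rw [if_pos (by omega)]

lemma g6w10 (_h1 : 2*a+2*b+c+2*d+e+f ≤ i) (_h2 : i < 2*a+2*b+2*c+2*d+e+f) :
    g6 a b c d e f i = (a+b) + (i - (2*a+2*b+c+2*d+e+f)) := by
  unfold g6
  rw [if_neg (by omega)]
  rw [if_neg (by omega)]
  rw [if_neg (by omega)]
  rw [if_neg (by omega)]
  rw [if_neg (by omega)]
  rw [if_neg (by omega)]
  rw [if_neg (by omega)]
  rw [if_neg (by omega)]
  rw [if_neg (by omega)]
  rw [if_pos (by omega)]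

lemma g6w11 (_h1 : 2*a+2*b+2*c+2*d+e+f ≤ i) (_h2 : i < 2*a+2*b+2*c+2*d+2*e+f) :
    g6 a b c d e f i = (2*a+b+c+d) + (i - (2*a+2*b+2*c+2*d+e+f)) := by
  unfold g6
  rw [if_neg (by omega)]
  rw [if_neg (by omega)]
  rw [if_neg (by omega)]
  rw [if_neg (by omega)]
  rw [if_neg (by omega)]
  rw [if_neg (by omega)]
  rw [if_neg (by omega)]
  rw [if_neg (by omega)]
  rw [if_neg (by omega)]
  rw [if_neg (by omega)]
  rw [if_pos (by omega)]

lemma g6w12 (_h1 : 2*a+2*b+2*c+2*d+2*e+f ≤ i) (_h2 : i < 2*a+2*b+2*c+2*d+2*e+2*f) :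
    g6 a b c d e f i = (2*a+2*b+c+2*d+e) + (i - (2*a+2*b+2*c+2*d+2*e+f)) := by
  unfold g6
  rw [if_neg (by omega)]
  rw [if_neg (by omega)]
  rw [if_neg (by omega)]
  rw [if_neg (by omega)]
  rw [if_neg (by omega)]
  rw [if_neg (by omega)]
  rw [if_neg (by omega)]
  rw [if_neg (by omega)]
  rw [if_neg (by omega)]
  rw [if_neg (by omega)]
  rw [if_neg (by omega)]

lemma g6_windows (hi : i < 2*(a+b+c+d+e+f)) :
    (0 ≤ i ∧ i < a) ∨ (a ≤ i ∧ i < a+b) ∨ (a+b ≤ i ∧ i < a+b+c) ∨ (a+b+c ≤ i ∧ i < 2*a+b+c) ∨ (2*a+b+c ≤ i ∧ i < 2*a+b+c+d) ∨ (2*a+b+c+d ≤ i ∧ i < 2*a+b+c+d+e) ∨ (2*a+b+c+d+e ≤ i ∧ i < 2*a+2*b+c+d+e) ∨ (2*a+2*b+c+d+e ≤ i ∧ i < 2*a+2*b+c+2*d+e) ∨ (2*a+2*b+c+2*d+e ≤ i ∧ i < 2*a+2*b+c+2*d+e+f) ∨ (2*a+2*b+c+2*d+e+f ≤ i ∧ i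 < 2*a+2*b+2*c+2*d+e+f) ∨ (2*a+2*b+2*c+2*d+e+f ≤ i ∧ i < 2*a+2*b+2*c+2*d+2*e+f) ∨ (2*a+2*b+2*c+2*d+2*e+f ≤ i ∧ i < 2*a+2*b+2*c+2*d+2*e+2*f) := by omega

lemma g6_lt (hi : i < 2*(a+b+c+d+e+f)) : g6 a b c d e f i < 2*(a+b+c+d+e+f) := by
  rcases g6_windows hi with h|h|h|h|h|h|h|h|h|h|h|h
  · rw [g6w1 (by omega) (by omega)]; omega
  · rw [g6w2 (by omega) (by omega)]; omega
  · rw [g6w3 (by omega) (by omega)]; omega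
  · rw [g6w4 (by omega) (by omega)]; omega
  · rw [g6w5 (by omega) (by omega)]; omega
  · rw [g6w6 (by omega) (by omega)]; omega
  · rw [g6w7 (by omega) (by omega)]; omega
  · rw [g6w8 (by omega) (by omega)]; omega
  · rw [g6w9 (by omega) (by omega)]; omega
  · rw [g6w10 (by omega) (by omega)]; omega
  · rw [g6w11 (by omega) (by omega)]; omega
  · rw [g6w12 (by omega) (by omega)]; omega

lemma g6_ne (ha : 1 ≤ a) (hb : 1 ≤ b) (hc : 1 ≤ c) (hd : 1 ≤ d) (he : 1 ≤ e)
    (hf : 1 ≤ f) (hi : i < 2*(a+b+c+d+e+f)) : g6 a b c d e f i ≠ i := by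
  rcases g6_windows hi with h|h|h|h|h|h|h|h|h|h|h|h
  · rw [g6w1 (by omega) (by omega)]; omega
  · rw [g6w2 (by omega) (by omega)]; omega
  · rw [g6w3 (by omega) (by omega)]; omega
  · rw [g6w4 (by omega) (by omega)]; omega
  · rw [g6w5 (by omega) (by omega)]; omega
  · rw [g6w6 (by omega) (by omega)]; omega
  · rw [g6w7 (by omega) (by omega)]; omega
  · rw [g6w8 (by omega) (by omega)]; omega
  · rw [g6w9 (by omega) (by omega)]; omega
  · rw [g6w10 (by omega) (by omega)]; omega
  · rw [g6w11 (by omega) (by omega)]; omega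
  · rw [g6w12 (by omega) (by omega)]; omega

lemma g6_inv (hi : i < 2*(a+b+c+d+e+f)) : g6 a b c d e f (g6 a b c d e f i) = i := by
  rcases g6_windows hi with h|h|h|h|h|h|h|h|h|h|h|h
  · rw [g6w1 (i := i) (by omega) (by omega), g6w4 (i := (a+b+c) + (i - (0))) (by omega) (by omega)]; omega
  · rw [g6w2 (i := i) (by omega) (by omega), g6w7 (i := (2*a+b+c+d+e) + (i - (a))) (by omega) (by omega)]; omega
  · rw [g6w3 (i := i) (by omega) (by omega), g6w10 (i := (2*a+2*b+c+2*d+e+f) + (i - (a+b))) (by omega) (by omega)]; omega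
  · rw [g6w4 (i := i) (by omega) (by omega), g6w1 (i := (0) + (i - (a+b+c))) (by omega) (by omega)]; omega
  · rw [g6w5 (i := i) (by omega) (by omega), g6w8 (i := (2*a+2*b+c+d+e) + (i - (2*a+b+c))) (by omega) (by omega)]; omega
  · rw [g6w6 (i := i) (by omega) (by omega), g6w11 (i := (2*a+2*b+2*c+2*d+e+f) + (i - (2*a+b+c+d))) (by omega) (by omega)]; omega
  · rw [g6w7 (i := i) (by omega) (by omega), g6w2 (i := (a) + (i - (2*a+b+c+d+e))) (by omega) (by omega)]; omega
  · rw [g6w8 (i := i) (by omega) (by omega), g6w5 (i := (2*a+b+c) + (i - (2*a+2*b+c+d+e))) (by omega) (by omega)]; omega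
  · rw [g6w9 (i := i) (by omega) (by omega), g6w12 (i := (2*a+2*b+2*c+2*d+2*e+f) + (i - (2*a+2*b+c+2*d+e))) (by omega) (by omega)]; omega
  · rw [g6w10 (i := i) (by omega) (by omega), g6w3 (i := (a+b) + (i - (2*a+2*b+c+2*d+e+f))) (by omega) (by omega)]; omega
  · rw [g6w11 (i := i) (by omega) (by omega), g6w6 (i := (2*a+b+c+d) + (i - (2*a+2*b+2*c+2*d+e+f))) (by omega) (by omega)]; omega
  · rw [g6w12 (i := i) (by omega) (by omega), g6w9 (i := (2*a+2*b+c+2*d+e) + (i - (2*a+2*b+2*c+2*d+2*e+f))) (by omega) (by omega)]; omega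

lemma g6_desc (ha : 1 ≤ a) (hb : 1 ≤ b) (hc : 1 ≤ c) (hd : 1 ≤ d) (he : 1 ≤ e)
    (hf : 1 ≤ f) (hi : i + 1 < 2*(a+b+c+d+e+f)) :
    (g6 a b c d e f (i+1) < g6 a b c d e f i ↔
      (i + 1 = a+b+c ∨ i + 1 = 2*a+b+c+d+e ∨ i + 1 = 2*a+2*b+c+2*d+e+f)) := by
  rcases g6_windows (a:=a) (b:=b) (c:=c) (d:=d) (e:=e) (f:=f) (i:=i) (by omega) with h|h|h|h|h|h|h|h|h|h|h|h
  · rcases Nat.lt_or_ge (i+1) (a) with h2|h2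
    · rw [g6w1 (i:=i+1) (by omega) (by omega), g6w1 (i:=i) (by omega) (by omega)]; omega
    · rw [g6w2 (i:=i+1) (by omega) (by omega), g6w1 (i:=i) (by omega) (by omega)]; omega
  · rcases Nat.lt_or_ge (i+1) (a+b) with h2|h2
    · rw [g6w2 (i:=i+1) (by omega) (by omega), g6w2 (i:=i) (by omega) (by omega)]; omega
    · rw [g6w3 (i:=i+1) (by omega) (by omega), g6w2 (i:=i) (by omega) (by omega)]; omega
  · rcases Nat.lt_or_ge (i+1) (a+b+c) with h2|h2
    · rw [g6w3 (i:=i+1) (by omega) (by omega), g6w3 (i:=i) (by omega) (by omega)]; omega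
    · rw [g6w4 (i:=i+1) (by omega) (by omega), g6w3 (i:=i) (by omega) (by omega)]; omega
  · rcases Nat.lt_or_ge (i+1) (2*a+b+c) with h2|h2
    · rw [g6w4 (i:=i+1) (by omega) (by omega), g6w4 (i:=i) (by omega) (by omega)]; omega
    · rw [g6w5 (i:=i+1) (by omega) (by omega), g6w4 (i:=i) (by omega) (by omega)]; omega
  · rcases Nat.lt_or_ge (i+1) (2*a+b+c+d) with h2|h2
    · rw [g6w5 (i:=i+1) (by omega) (by omega), g6w5 (i:=i) (by omega) (by omega)]; omega
    · rw [g6w6 (i:=i+1) (by omega) (by omega), g6w5 (i:=i) (by omega) (by omega)]; omega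
  · rcases Nat.lt_or_ge (i+1) (2*a+b+c+d+e) with h2|h2
    · rw [g6w6 (i:=i+1) (by omega) (by omega), g6w6 (i:=i) (by omega) (by omega)]; omega
    · rw [g6w7 (i:=i+1) (by omega) (by omega), g6w6 (i:=i) (by omega) (by omega)]; omega
  · rcases Nat.lt_or_ge (i+1) (2*a+2*b+c+d+e) with h2|h2
    · rw [g6w7 (i:=i+1) (by omega) (by omega), g6w7 (i:=i) (by omega) (by omega)]; omega
    · rw [g6w8 (i:=i+1) (by omega) (by omega), g6w7 (i:=i) (by omega) (by omega)]; omega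
  · rcases Nat.lt_or_ge (i+1) (2*a+2*b+c+2*d+e) with h2|h2
    · rw [g6w8 (i:=i+1) (by omega) (by omega), g6w8 (i:=i) (by omega) (by omega)]; omega
    · rw [g6w9 (i:=i+1) (by omega) (by omega), g6w8 (i:=i) (by omega) (by omega)]; omega
  · rcases Nat.lt_or_ge (i+1) (2*a+2*b+c+2*d+e+f) with h2|h2
    · rw [g6w9 (i:=i+1) (by omega) (by omega), g6w9 (i:=i) (by omega) (by omega)]; omega
    · rw [g6w10 (i:=i+1) (by omega) (by omega), g6w9 (i:=i) (by omega) (by omega)]; omega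
  · rcases Nat.lt_or_ge (i+1) (2*a+2*b+2*c+2*d+e+f) with h2|h2
    · rw [g6w10 (i:=i+1) (by omega) (by omega), g6w10 (i:=i) (by omega) (by omega)]; omega
    · rw [g6w11 (i:=i+1) (by omega) (by omega), g6w10 (i:=i) (by omega) (by omega)]; omega
  · rcases Nat.lt_or_ge (i+1) (2*a+2*b+2*c+2*d+2*e+f) with h2|h2
    · rw [g6w11 (i:=i+1) (by omega) (by omega), g6w11 (i:=i) (by omega) (by omega)]; omega
    · rw [g6w12 (i:=i+1) (by omega) (by omega), g6w11 (i:=i) (by omega) (by omega)]; omega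
  · rw [g6w12 (i:=i+1) (by omega) (by omega), g6w12 (i:=i) (by omega) (by omega)]; omega
def mk6fun (n a b c d e f : ℕ) (hs : a+b+c+d+e+f = n) (x : Fin (2*n)) : Fin (2*n) :=
  ⟨g6 a b c d e f x.1, by subst hs; exact g6_lt x.2⟩

lemma mk6fun_inv (n a b c d e f : ℕ) (hs : a+b+c+d+e+f = n) :
    Function.Involutive (mk6fun n a b c d e f hs) := by
  subst hs
  intro x
  apply Fin.ext
  exact g6_inv x.2

def mk6 (n a b c d e f : ℕ) (hs : a+b+c+d+e+f = n) : Equiv.Perm (Fin (2*n)) :=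
  (mk6fun_inv n a b c d e f hs).toPerm

lemma mk6_apply (n a b c d e f : ℕ) (hs : a+b+c+d+e+f = n) (x : Fin (2*n)) :
    ((mk6 n a b c d e f hs x : Fin (2*n)) : ℕ) = g6 a b c d e f x.1 := rfl

lemma mk6_sq (n a b c d e f : ℕ) (hs : a+b+c+d+e+f = n) :
    mk6 n a b c d e f hs * mk6 n a b c d e f hs = 1 := by
  apply Equiv.ext
  intro x
  rw [Equiv.Perm.mul_apply]
  apply Fin.ext
  rw [mk6_apply, mk6_apply]
  subst hs
  exact g6_inv x.2

lemma mk6_fpf (n a b c d e f : ℕ) (hs : a+b+c+d+e+f = n)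
    (ha : 1 ≤ a) (hb : 1 ≤ b) (hc : 1 ≤ c) (hd : 1 ≤ d) (he : 1 ≤ e) (hf : 1 ≤ f) :
    ∀ x, mk6 n a b c d e f hs x ≠ x := by
  intro x hx
  have : ((mk6 n a b c d e f hs x : Fin (2*n)) : ℕ) = (x : ℕ) := by rw [hx]
  rw [mk6_apply] at this
  subst hs
  exact g6_ne ha hb hc hd he hf x.2 this

lemma mk6_permVal (n a b c d e f : ℕ) (hs : a+b+c+d+e+f = n) (j : ℕ) (hj : j < 2*n) :
    permVal (mk6 n a b c d e f hs) j = g6 a b c d e f j := by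
  rw [permVal, dif_pos hj]
  exact mk6_apply n a b c d e f hs ⟨j, hj⟩

lemma mk6_des (n a b c d e f : ℕ) (hs : a+b+c+d+e+f = n)
    (ha : 1 ≤ a) (hb : 1 ≤ b) (hc : 1 ≤ c) (hd : 1 ≤ d) (he : 1 ≤ e) (hf : 1 ≤ f) :
    des (mk6 n a b c d e f hs) = 3 := by
  have hct : ((Finset.range (2*n - 1)).filter
      (fun i => permVal (mk6 n a b c d e f hs) (i + 1) < permVal (mk6 n a b c d e f hs) i))
      = {a+b+c-1, 2*a+b+c+d+e-1, 2*a+2*b+c+2*d+e+f-1} := by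
    ext t
    simp only [Finset.mem_filter, Finset.mem_range, Finset.mem_insert, Finset.mem_singleton]
    constructor
    · rintro ⟨ht, hlt⟩
      rw [mk6_permVal n a b c d e f hs (t+1) (by omega),
          mk6_permVal n a b c d e f hs t (by omega)] at hlt
      have := (g6_desc ha hb hc hd he hf (by omega : t + 1 < 2*(a+b+c+d+e+f))).mp hlt
      omega
    · intro ht
      have ht2 : t < 2*n - 1 := by omega
      refine ⟨ht2, ?_⟩
      rw [mk6_permVal n a b c d e f hs (t+1) (by omega),
          mk6_permVal n a b c d e f hs t (by omega)]
      exact (g6_desc ha hb hc hd he hf (by omega : t + 1 < 2*(a+b+c+d+e+f))).mpr (by omega)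
  rw [des]
  rw [show (2*n) - 1 = 2*n - 1 from rfl]
  rw [hct]
  rw [Finset.card_insert_of_notMem (by simp; omega),
      Finset.card_insert_of_notMem (by simp; omega), Finset.card_singleton]
lemma mk6_inj (n a b c d e f a' b' c' d' e' f' : ℕ)
    (hs : a+b+c+d+e+f = n) (hs' : a'+b'+c'+d'+e'+f' = n)
    (ha : 1 ≤ a) (hb : 1 ≤ b) (hc : 1 ≤ c) (hd : 1 ≤ d) (he : 1 ≤ e) (hf : 1 ≤ f)
    (ha' : 1 ≤ a') (hb' : 1 ≤ b') (hc' : 1 ≤ c') (hd' : 1 ≤ d') (he' : 1 ≤ e') (hf' : 1 ≤ f')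
    (h : mk6 n a b c d e f hs = mk6 n a' b' c' d' e' f' hs') :
    a = a' ∧ b = b' ∧ c = c' ∧ d = d' ∧ e = e' := by
  have H : ∀ j, (hj : j < 2*n) → g6 a b c d e f j = g6 a' b' c' d' e' f' j := by
    intro j hj
    have h2 : mk6 n a b c d e f hs ⟨j, hj⟩ = mk6 n a' b' c' d' e' f' hs' ⟨j, hj⟩ := by rw [h]
    have h3 := congrArg Fin.val h2
    rwa [mk6_apply, mk6_apply] at h3
  -- Step 1 : sA = sA'
  have e1 := H 0 (by omega)
  rw [g6w1 (a:=a) (b:=b) (c:=c) (d:=d) (e:=e) (f:=f) (i:=0) (by omega) (by omega),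
      g6w1 (a:=a') (b:=b') (c:=c') (d:=d') (e:=e') (f:=f') (i:=0) (by omega) (by omega)] at e1
  -- Step 2 : pD = pD'
  have e2 := H (2*n - 1) (by omega)
  rw [g6w12 (a:=a) (b:=b) (c:=c) (d:=d) (e:=e) (f:=f) (i:=2*n-1) (by omega) (by omega),
      g6w12 (a:=a') (b:=b') (c:=c') (d:=d') (e:=e') (f:=f') (i:=2*n-1) (by omega) (by omega)] at e2
  -- Step 3 : c = c'
  have e3 := H (a+b+c-1) (by omega)
  rw [g6w3 (a:=a) (b:=b) (c:=c) (d:=d) (e:=e) (f:=f) (i:=a+b+c-1) (by omega) (by omega),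
      g6w3 (a:=a') (b:=b') (c:=c') (d:=d') (e:=e') (f:=f') (i:=a+b+c-1) (by omega) (by omega)] at e3
  -- Step 4 : a+b = a'+b'
  have e4 := H (2*a+2*b+c+2*d+e+f) (by omega)
  rw [g6w10 (a:=a) (b:=b) (c:=c) (d:=d) (e:=e) (f:=f) (i:=2*a+2*b+c+2*d+e+f) (by omega) (by omega),
      g6w10 (a:=a') (b:=b') (c:=c') (d:=d') (e:=e') (f:=f') (i:=2*a+2*b+c+2*d+e+f) (by omega) (by omega)] at e4
  -- Step 5 : a+d = a'+d'
  have e5 := H (2*a+2*b+2*c+2*d+e+f) (by omega)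
  rw [g6w11 (a:=a) (b:=b) (c:=c) (d:=d) (e:=e) (f:=f) (i:=2*a+2*b+2*c+2*d+e+f) (by omega) (by omega),
      g6w11 (a:=a') (b:=b') (c:=c') (d:=d') (e:=e') (f:=f') (i:=2*a+2*b+2*c+2*d+e+f) (by omega) (by omega)] at e5
  -- Step 6 : a = a'
  have e6 : a = a' := by
    rcases Nat.lt_trichotomy a a' with hlt | heq | hgt
    · exfalso
      have e6a := H (2*a+b+c) (by omega)
      rw [g6w5 (a:=a) (b:=b) (c:=c) (d:=d) (e:=e) (f:=f) (i:=2*a+b+c) (by omega) (by omega),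
          g6w4 (a:=a') (b:=b') (c:=c') (d:=d') (e:=e') (f:=f') (i:=2*a+b+c) (by omega) (by omega)] at e6a
      omega
    · exact heq
    · exfalso
      have e6a := H (2*a'+b'+c') (by omega)
      rw [g6w4 (a:=a) (b:=b) (c:=c) (d:=d) (e:=e) (f:=f) (i:=2*a'+b'+c') (by omega) (by omega),
          g6w5 (a:=a') (b:=b') (c:=c') (d:=d') (e:=e') (f:=f') (i:=2*a'+b'+c') (by omega) (by omega)] at e6a
      omega
  -- Step 7 : e = e'
  have e7 : e = e' := by
    rcases Nat.lt_trichotomy e e' with hlt | heq | hgt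
    · exfalso
      have e7a := H (2*a+2*b+2*c+2*d+2*e+f) (by omega)
      rw [g6w12 (a:=a) (b:=b) (c:=c) (d:=d) (e:=e) (f:=f) (i:=2*a+2*b+2*c+2*d+2*e+f) (by omega) (by omega),
          g6w11 (a:=a') (b:=b') (c:=c') (d:=d') (e:=e') (f:=f') (i:=2*a+2*b+2*c+2*d+2*e+f) (by omega) (by omega)] at e7a
      omega
    · exact heq
    · exfalso
      have e7a := H (2*a'+2*b'+2*c'+2*d'+2*e'+f') (by omega)
      rw [g6w11 (a:=a) (b:=b) (c:=c) (d:=d) (e:=e) (f:=f) (i:=2*a'+2*b'+2*c'+2*d'+2*e'+f') (by omega) (by omega),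
          g6w12 (a:=a') (b:=b') (c:=c') (d:=d') (e:=e') (f:=f') (i:=2*a'+2*b'+2*c'+2*d'+2*e'+f') (by omega) (by omega)] at e7a
      omega
  omega
/-! ### The one-descent witness -/

def gsh (n i : ℕ) : ℕ := if i < n then n + i else i - n

lemma gsh_lt {n i : ℕ} (hi : i < 2*n) : gsh n i < 2*n := by unfold gsh; split <;> omega

lemma gsh_inv {n i : ℕ} (hi : i < 2*n) : gsh n (gsh n i) = i := by
  unfold gsh; split <;> split <;> omega

lemma gsh_ne {n i : ℕ} (hn : 1 ≤ n) (hi : i < 2*n) : gsh n i ≠ i := by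
  unfold gsh; split <;> omega

lemma gsh_desc {n i : ℕ} (hn : 1 ≤ n) (hi : i + 1 < 2*n) :
    (gsh n (i+1) < gsh n i ↔ i + 1 = n) := by
  unfold gsh; split <;> split <;> omega

def mkshfun (n : ℕ) (x : Fin (2*n)) : Fin (2*n) := ⟨gsh n x.1, gsh_lt x.2⟩

lemma mkshfun_inv (n : ℕ) : Function.Involutive (mkshfun n) := by
  intro x; apply Fin.ext; exact gsh_inv x.2

def mksh (n : ℕ) : Equiv.Perm (Fin (2*n)) := (mkshfun_inv n).toPerm

lemma mksh_apply (n : ℕ) (x : Fin (2*n)) : ((mksh n x : Fin (2*n)) : ℕ) = gsh n x.1 := rfl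

lemma mksh_sq (n : ℕ) : mksh n * mksh n = 1 := by
  apply Equiv.ext; intro x
  rw [Equiv.Perm.mul_apply]; apply Fin.ext
  rw [mksh_apply, mksh_apply]; exact gsh_inv x.2

lemma mksh_fpf {n : ℕ} (hn : 1 ≤ n) : ∀ x, mksh n x ≠ x := by
  intro x hx
  have : ((mksh n x : Fin (2*n)) : ℕ) = (x : ℕ) := by rw [hx]
  rw [mksh_apply] at this
  exact gsh_ne hn x.2 this

lemma mksh_permVal {n : ℕ} (j : ℕ) (hj : j < 2*n) : permVal (mksh n) j = gsh n j := by
  rw [permVal, dif_pos hj]; exact mksh_apply n ⟨j, hj⟩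

lemma mksh_des {n : ℕ} (hn : 1 ≤ n) : des (mksh n) = 1 := by
  have hct : ((Finset.range (2*n - 1)).filter
      (fun i => permVal (mksh n) (i + 1) < permVal (mksh n) i)) = {n - 1} := by
    ext t
    simp only [Finset.mem_filter, Finset.mem_range, Finset.mem_singleton]
    constructor
    · rintro ⟨ht, hlt⟩
      rw [mksh_permVal (t+1) (by omega), mksh_permVal t (by omega)] at hlt
      have := (gsh_desc hn (by omega)).mp hlt
      omega
    · intro ht
      refine ⟨by omega, ?_⟩
      rw [mksh_permVal (t+1) (by omega), mksh_permVal t (by omega)]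
      exact (gsh_desc hn (by omega)).mpr (by omega)
  rw [des, hct, Finset.card_singleton]

lemma matchingDes_one {n : ℕ} (hn : 1 ≤ n) : 1 ≤ matchingDes n 1 := by
  rw [matchingDes]
  apply Finset.card_pos.mpr
  refine ⟨(show Equiv.Perm (Fin (2*n)) from mksh n), ?_⟩
  simp only [Finset.mem_filter, Finset.mem_univ, true_and]
  exact ⟨mksh_sq n, mksh_fpf hn, mksh_des hn⟩

/-! ### The three-descent lower bound -/

lemma matchingDes_three {n : ℕ} (hn : 6 ≤ n) : (n/6)^5 ≤ matchingDes n 3 := by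
  classical
  set M := n / 6 with hM
  set box : Finset (ℕ×ℕ×ℕ×ℕ×ℕ) :=
    (Finset.Icc 1 M) ×ˢ (Finset.Icc 1 M) ×ˢ (Finset.Icc 1 M) ×ˢ (Finset.Icc 1 M) ×ˢ (Finset.Icc 1 M)
    with hbox
  have hcard : box.card = M^5 := by
    simp [hbox, Nat.card_Icc]
    ring
  set Φ : (ℕ×ℕ×ℕ×ℕ×ℕ) → Equiv.Perm (Fin (2*n)) := fun p =>
    if h : p.1 + p.2.1 + p.2.2.1 + p.2.2.2.1 + p.2.2.2.2 + 1 ≤ n then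
      mk6 n p.1 p.2.1 p.2.2.1 p.2.2.2.1 p.2.2.2.2
        (n - (p.1 + p.2.1 + p.2.2.1 + p.2.2.2.1 + p.2.2.2.2)) (by omega)
    else 1 with hΦ
  rw [matchingDes, ← hcard]
  apply Finset.card_le_card_of_injOn Φ
  · rintro ⟨a, b, c, d, e⟩ hp
    simp only [Finset.mem_coe, hbox, Finset.mem_product, Finset.mem_Icc] at hp
    obtain ⟨⟨ha1, ha2⟩, ⟨hb1, hb2⟩, ⟨hc1, hc2⟩, ⟨hd1, hd2⟩, ⟨he1, he2⟩⟩ := hp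
    have hsum : a + b + c + d + e + 1 ≤ n := by omega
    simp only [hΦ, dif_pos hsum]
    simp only [Finset.mem_coe, Finset.mem_filter, Finset.mem_univ, true_and]
    refine ⟨mk6_sq _ _ _ _ _ _ _ _, mk6_fpf _ _ _ _ _ _ _ _ ha1 hb1 hc1 hd1 he1 (by omega),
      mk6_des _ _ _ _ _ _ _ _ ha1 hb1 hc1 hd1 he1 (by omega)⟩
  · rintro ⟨a, b, c, d, e⟩ hp ⟨a', b', c', d', e'⟩ hq hpq
    simp only [Finset.mem_coe, hbox, Finset.mem_product, Finset.mem_Icc] at hp hq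
    obtain ⟨⟨ha1, ha2⟩, ⟨hb1, hb2⟩, ⟨hc1, hc2⟩, ⟨hd1, hd2⟩, ⟨he1, he2⟩⟩ := hp
    obtain ⟨⟨ha1', ha2'⟩, ⟨hb1', hb2'⟩, ⟨hc1', hc2'⟩, ⟨hd1', hd2'⟩, ⟨he1', he2'⟩⟩ := hq
    have hsum : a + b + c + d + e + 1 ≤ n := by omega
    have hsum' : a' + b' + c' + d' + e' + 1 ≤ n := by omega
    simp only [hΦ, dif_pos hsum, dif_pos hsum'] at hpq
    have := mk6_inj n a b c d e (n - (a+b+c+d+e)) a' b' c' d' e' (n - (a'+b'+c'+d'+e'))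
      (by omega) (by omega) ha1 hb1 hc1 hd1 he1 (by omega)
      ha1' hb1' hc1' hd1' he1' (by omega) hpq
    obtain ⟨h1, h2, h3, h4, h5⟩ := this
    simp_all
/-! ### Uniqueness of fpf involutions with two descents -/

lemma lin_seg (v : ℕ → ℕ) (lo len t : ℕ)
    (hmono : ∀ i j, lo ≤ i → i < j → j < lo + len → v i < v j)
    (hbnd : ∀ i, lo ≤ i → i < lo + len → t ≤ v i ∧ v i < t + len) :
    ∀ i, lo ≤ i → i < lo + len → v i = t + (i - lo) := by
  have step : ∀ k i, lo ≤ i → i + k < lo + len → v i + k ≤ v (i + k) := by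
    intro k
    induction k with
    | zero => intro i _ _; simp
    | succ k ih =>
      intro i hi hk
      have h1 := ih i hi (by omega)
      have h2 := hmono (i + k) (i + k + 1) (by omega) (by omega) (by omega)
      have e : i + (k + 1) = i + k + 1 := by omega
      rw [e]
      omega
  intro i hi hilen
  have low := (hbnd lo (le_refl _) (by omega)).1
  have l1 := step (i - lo) lo (le_refl _) (by omega)
  have e1 : lo + (i - lo) = i := by omega
  rw [e1] at l1
  have l2 := step (lo + len - 1 - i) i hi (by omega)
  have e2 : i + (lo + len - 1 - i) = lo + len - 1 := by omega
  rw [e2] at l2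
  have hb2 := (hbnd (lo + len - 1) (by omega) (by omega)).2
  omega

lemma dc_eq_Ico (S : Finset ℕ) (lo hi : ℕ) (hsub : S ⊆ Finset.Ico lo hi)
    (hdc : ∀ i j, lo ≤ i → i ≤ j → j ∈ S → i ∈ S) : S = Finset.Ico lo (lo + S.card) := by
  have hsub2 : S ⊆ Finset.Ico lo (lo + S.card) := by
    intro k hk
    have hk1 : lo ≤ k := (Finset.mem_Ico.mp (hsub hk)).1
    have hsub3 : Finset.Ico lo (k+1) ⊆ S := by
      intro j hj
      rw [Finset.mem_Ico] at hj
      exact hdc j k hj.1 (by omega) hk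
    have hcard := Finset.card_le_card hsub3
    rw [Nat.card_Ico] at hcard
    exact Finset.mem_Ico.mpr ⟨hk1, by omega⟩
  exact Finset.eq_of_subset_of_card_le hsub2 (by rw [Nat.card_Ico]; omega)

lemma block_strict_mono {v : ℕ → ℕ} {lo hi : ℕ}
    (h : ∀ i, lo ≤ i → i + 1 ≤ hi → v i < v (i+1)) :
    ∀ i j, lo ≤ i → i < j → j ≤ hi → v i < v j := by
  intro i j hi hij hj
  induction j, hij using Nat.le_induction with
  | base => exact h i hi (by omega)
  | succ j hij ih =>
    have h1 := ih (by omega)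
    have h2 := h j (by omega) (by omega)
    omega
lemma canonical (m p pC : ℕ) (v : ℕ → ℕ)
    (hp : 1 ≤ p) (hppC : p + 1 ≤ pC) (hpCm : pC + 1 ≤ m)
    (hlt : ∀ i, i < m → v i < m)
    (hinv : ∀ i, i < m → v (v i) = i)
    (hne : ∀ i, i < m → v i ≠ i)
    (hA : ∀ i j, i < j → j < p → v i < v j)
    (hB : ∀ i j, p ≤ i → i < j → j < pC → v i < v j)
    (hC : ∀ i j, pC ≤ i → i < j → j < m → v i < v j) :
    ∃ x y z, x + y = p ∧ x + z = pC - p ∧ y + z = m - pC ∧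
      ∀ i, i < m → v i =
        (if i < x then p + i
         else if i < p then pC + (i - x)
         else if i < p + x then i - p
         else if i < pC then pC + y + (i - (p + x))
         else if i < pC + y then x + (i - pC)
         else p + x + (i - (pC + y))) := by
  classical
  -- weak monotony
  have hA' : ∀ i j, i ≤ j → j < p → v i ≤ v j := by
    intro i j hij hj
    rcases Nat.eq_or_lt_of_le hij with rfl | h
    · exact le_refl _
    · exact le_of_lt (hA i j h hj)
  have hB' : ∀ i j, p ≤ i → i ≤ j → j < pC → v i ≤ v j := by
    intro i j hpi hij hj
    rcases Nat.eq_or_lt_of_le hij with rfl | h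
    · exact le_refl _
    · exact le_of_lt (hB i j hpi h hj)
  have hC' : ∀ i j, pC ≤ i → i ≤ j → j < m → v i ≤ v j := by
    intro i j hpi hij hj
    rcases Nat.eq_or_lt_of_le hij with rfl | h
    · exact le_refl _
    · exact le_of_lt (hC i j hpi h hj)
  -- no within-block values
  have nwA : ∀ i, i < p → ¬ (v i < p) := by
    intro i hi hvi
    have hj := hinv i (by omega)
    rcases Nat.lt_trichotomy i (v i) with h | h | h
    · have := hA i (v i) h hvi
      rw [hj] at this; omega
    · exact hne i (by omega) h.symm
    · have := hA (v i) i h hi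
      rw [hj] at this; omega
  have nwB : ∀ i, p ≤ i → i < pC → ¬ (p ≤ v i ∧ v i < pC) := by
    intro i hpi hi ⟨hv1, hv2⟩
    have hj := hinv i (by omega)
    rcases Nat.lt_trichotomy i (v i) with h | h | h
    · have := hB i (v i) hpi h hv2
      rw [hj] at this; omega
    · exact hne i (by omega) h.symm
    · have := hB (v i) i hv1 h hi
      rw [hj] at this; omega
  have nwC : ∀ i, pC ≤ i → i < m → ¬ (pC ≤ v i) := by
    intro i hpi hi hv1
    have hj := hinv i (by omega)
    have hv2 : v i < m := hlt i (by omega)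
    rcases Nat.lt_trichotomy i (v i) with h | h | h
    · have := hC i (v i) hpi h hv2
      rw [hj] at this; omega
    · exact hne i (by omega) h.symm
    · have := hC (v i) i hv1 h hi
      rw [hj] at this; omega
  -- the six sets
  set SAB := (Finset.Ico 0 p).filter (fun i => v i < pC) with hSAB
  set SAC := (Finset.Ico 0 p).filter (fun i => pC ≤ v i) with hSAC
  set SBA := (Finset.Ico p pC).filter (fun i => v i < p) with hSBA
  set SBC := (Finset.Ico p pC).filter (fun i => pC ≤ v i) with hSBC
  set SCA := (Finset.Ico pC m).filter (fun i => v i < p) with hSCA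
  set SCB := (Finset.Ico pC m).filter (fun i => p ≤ v i ∧ v i < pC) with hSCB
  set x := SAB.card with hx
  set y := SAC.card with hy
  set z := SBC.card with hz
  -- card equalities via the involution
  have cBA : SBA.card = x := by
    rw [hx]
    apply Finset.card_bij' (fun i _ => v i) (fun j _ => v j)
    · intro i hi
      simp only [hSBA, Finset.mem_filter, Finset.mem_Ico] at hi
      obtain ⟨⟨h1, h2⟩, h3⟩ := hi
      simp only [hSAB, Finset.mem_filter, Finset.mem_Ico]
      have := hinv i (by omega)
      omega
    · intro j hj
      simp only [hSAB, Finset.mem_filter, Finset.mem_Ico] at hj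
      obtain ⟨⟨h1, h2⟩, h3⟩ := hj
      simp only [hSBA, Finset.mem_filter, Finset.mem_Ico]
      have := hinv j (by omega)
      have := nwA j (by omega)
      omega
    · intro i hi
      simp only [hSBA, Finset.mem_filter, Finset.mem_Ico] at hi
      exact hinv i (by omega)
    · intro j hj
      simp only [hSAB, Finset.mem_filter, Finset.mem_Ico] at hj
      exact hinv j (by omega)
  have cCA : SCA.card = y := by
    rw [hy]
    apply Finset.card_bij' (fun i _ => v i) (fun j _ => v j)
    · intro i hi
      simp only [hSCA, Finset.mem_filter, Finset.mem_Ico] at hi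
      obtain ⟨⟨h1, h2⟩, h3⟩ := hi
      simp only [hSAC, Finset.mem_filter, Finset.mem_Ico]
      have := hinv i (by omega)
      omega
    · intro j hj
      simp only [hSAC, Finset.mem_filter, Finset.mem_Ico] at hj
      obtain ⟨⟨h1, h2⟩, h3⟩ := hj
      simp only [hSCA, Finset.mem_filter, Finset.mem_Ico]
      have := hinv j (by omega)
      have := hlt j (by omega)
      omega
    · intro i hi
      simp only [hSCA, Finset.mem_filter, Finset.mem_Ico] at hi
      exact hinv i (by omega)
    · intro j hj
      simp only [hSAC, Finset.mem_filter, Finset.mem_Ico] at hj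
      exact hinv j (by omega)
  have cCB : SCB.card = z := by
    rw [hz]
    apply Finset.card_bij' (fun i _ => v i) (fun j _ => v j)
    · intro i hi
      simp only [hSCB, Finset.mem_filter, Finset.mem_Ico] at hi
      obtain ⟨⟨h1, h2⟩, h3⟩ := hi
      simp only [hSBC, Finset.mem_filter, Finset.mem_Ico]
      have := hinv i (by omega)
      omega
    · intro j hj
      simp only [hSBC, Finset.mem_filter, Finset.mem_Ico] at hj
      obtain ⟨⟨h1, h2⟩, h3⟩ := hj
      simp only [hSCB, Finset.mem_filter, Finset.mem_Ico]
      have h4 := hinv j (by omega)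
      have h5 := hlt j (by omega)
      have h6 := nwC (v j) h3 h5
      omega
    · intro i hi
      simp only [hSCB, Finset.mem_filter, Finset.mem_Ico] at hi
      exact hinv i (by omega)
    · intro j hj
      simp only [hSBC, Finset.mem_filter, Finset.mem_Ico] at hj
      exact hinv j (by omega)
  -- partitions
  have hxy : x + y = p := by
    have hpart := Finset.card_filter_add_card_filter_not
      (s := Finset.Ico 0 p) (p := fun i => v i < pC)
    simp only [not_lt] at hpart
    rw [← hSAB, ← hSAC, Nat.card_Ico] at hpart
    omega
  have hxz : x + z = pC - p := by
    have hpart := Finset.card_filter_add_card_filter_not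
      (s := Finset.Ico p pC) (p := fun i => v i < p)
    simp only [not_lt] at hpart
    have hco : (Finset.Ico p pC).filter (fun i => p ≤ v i) = SBC := by
      ext i
      simp only [hSBC, Finset.mem_filter, Finset.mem_Ico]
      constructor
      · rintro ⟨h1, h2⟩
        have := nwB i h1.1 h1.2
        exact ⟨h1, by omega⟩
      · rintro ⟨h1, h2⟩; exact ⟨h1, by omega⟩
    rw [hco, ← hSBA, Nat.card_Ico] at hpart
    rw [← cBA]
    omega
  have hyz : y + z = m - pC := by
    have hpart := Finset.card_filter_add_card_filter_not
      (s := Finset.Ico pC m) (p := fun i => v i < p)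
    simp only [not_lt] at hpart
    have hco : (Finset.Ico pC m).filter (fun i => p ≤ v i) = SCB := by
      ext i
      simp only [hSCB, Finset.mem_filter, Finset.mem_Ico]
      constructor
      · rintro ⟨h1, h2⟩
        have := nwC i h1.1 h1.2
        exact ⟨h1, by omega⟩
      · rintro ⟨h1, h2⟩; exact ⟨h1, by omega⟩
    rw [hco, ← hSCA, Nat.card_Ico] at hpart
    rw [← cCA, ← cCB]
    omega
  -- initial segments
  have dcSAB : SAB = Finset.Ico 0 x := by
    have := dc_eq_Ico SAB 0 p (by
      intro i hi
      simp only [hSAB, Finset.mem_filter] at hi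
      exact hi.1) (by
      intro i j hi hij hj
      simp only [hSAB, Finset.mem_filter, Finset.mem_Ico] at hj ⊢
      obtain ⟨⟨_, h2⟩, h3⟩ := hj
      have := hA' i j hij h2
      exact ⟨⟨by omega, by omega⟩, by omega⟩)
    rw [← hx] at this
    simpa using this
  have dcSBA : SBA = Finset.Ico p (p + x) := by
    have := dc_eq_Ico SBA p pC (by
      intro i hi
      simp only [hSBA, Finset.mem_filter] at hi
      exact hi.1) (by
      intro i j hi hij hj
      simp only [hSBA, Finset.mem_filter, Finset.mem_Ico] at hj ⊢
      obtain ⟨⟨h1, h2⟩, h3⟩ := hj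
      have := hB' i j hi hij h2
      exact ⟨⟨by omega, by omega⟩, by omega⟩)
    rw [cBA] at this
    exact this
  have dcSCA : SCA = Finset.Ico pC (pC + y) := by
    have := dc_eq_Ico SCA pC m (by
      intro i hi
      simp only [hSCA, Finset.mem_filter] at hi
      exact hi.1) (by
      intro i j hi hij hj
      simp only [hSCA, Finset.mem_filter, Finset.mem_Ico] at hj ⊢
      obtain ⟨⟨h1, h2⟩, h3⟩ := hj
      have := hC' i j hi hij h2
      exact ⟨⟨by omega, by omega⟩, by omega⟩)
    rw [cCA] at this
    exact this
  -- pointwise bounds on the three "source" segments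
  have bndA1 : ∀ i, i < x → p ≤ v i ∧ v i < p + x := by
    intro i hi
    have hmem : i ∈ SAB := by rw [dcSAB]; simp; omega
    simp only [hSAB, Finset.mem_filter, Finset.mem_Ico] at hmem
    obtain ⟨⟨_, h2⟩, h3⟩ := hmem
    have h4 := nwA i h2
    have hmem2 : v i ∈ SBA := by
      simp only [hSBA, Finset.mem_filter, Finset.mem_Ico]
      have := hinv i (by omega)
      omega
    rw [dcSBA] at hmem2
    rw [Finset.mem_Ico] at hmem2
    omega
  have bndA2 : ∀ i, x ≤ i → i < p → pC ≤ v i ∧ v i < pC + y := by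
    intro i hxi hi
    have hnm : i ∉ SAB := by rw [dcSAB]; simp; omega
    simp only [hSAB, Finset.mem_filter, Finset.mem_Ico] at hnm
    push_neg at hnm
    have h3 : pC ≤ v i := hnm ⟨by omega, hi⟩
    have hmem2 : v i ∈ SCA := by
      simp only [hSCA, Finset.mem_filter, Finset.mem_Ico]
      have := hinv i (by omega)
      have := hlt i (by omega)
      omega
    rw [dcSCA] at hmem2
    rw [Finset.mem_Ico] at hmem2
    omega
  have bndB2 : ∀ i, p + x ≤ i → i < pC → pC + y ≤ v i ∧ v i < m := by
    intro i hxi hi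
    have hnm : i ∉ SBA := by rw [dcSBA]; simp; omega
    simp only [hSBA, Finset.mem_filter, Finset.mem_Ico] at hnm
    push_neg at hnm
    have h3 : p ≤ v i := hnm ⟨by omega, hi⟩
    have h4 := nwB i (by omega) hi
    have h5 : pC ≤ v i := by omega
    have h6 : v i < m := hlt i (by omega)
    have hnm2 : v i ∉ SCA := by
      simp only [hSCA, Finset.mem_filter, Finset.mem_Ico]
      push_neg
      intro _
      have := hinv i (by omega)
      omega
    rw [dcSCA] at hnm2
    rw [Finset.mem_Ico] at hnm2
    push_neg at hnm2
    have := hnm2 h5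
    omega
  -- the linear formulas on the three source segments
  have linA1 : ∀ i, i < x → v i = p + i := by
    have hxp : x ≤ p := by omega
    have := lin_seg v 0 x p (by
      intro i j _ hij hj
      exact hA i j hij (by omega)) (by
      intro i _ hi
      exact bndA1 i (by omega))
    intro i hi
    have h2 := this i (by omega) (by omega)
    omega
  have linA2 : ∀ i, x ≤ i → i < p → v i = pC + (i - x) := by
    have := lin_seg v x y pC (by
      intro i j hi hij hj
      exact hA i j hij (by omega)) (by
      intro i hi1 hi2
      exact bndA2 i hi1 (by omega))
    intro i hi1 hi2
    exact this i hi1 (by omega)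
  have linB2 : ∀ i, p + x ≤ i → i < pC → v i = pC + y + (i - (p + x)) := by
    have hm : m = pC + (y + z) := by omega
    have := lin_seg v (p + x) z (pC + y) (by
      intro i j hi hij hj
      exact hB i j (by omega) hij (by omega)) (by
      intro i hi1 hi2
      have := bndB2 i hi1 (by omega)
      omega)
    intro i hi1 hi2
    exact this i hi1 (by omega)
  refine ⟨x, y, z, hxy, hxz, hyz, ?_⟩
  intro i hi
  rcases (by omega : i < x ∨ (x ≤ i ∧ i < p) ∨ (p ≤ i ∧ i < p + x) ∨ (p + x ≤ i ∧ i < pC)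
      ∨ (pC ≤ i ∧ i < pC + y) ∨ (pC + y ≤ i ∧ i < m)) with h | h | h | h | h | h
  · rw [if_pos h]
    exact linA1 i h
  · rw [if_neg (by omega), if_pos (by omega)]
    exact linA2 i h.1 h.2
  · rw [if_neg (by omega), if_neg (by omega), if_pos (by omega)]
    have h1 : v (i - p) = p + (i - p) := linA1 (i - p) (by omega)
    have h2 : v (v (i - p)) = i - p := hinv (i - p) (by omega)
    rw [h1, (by omega : p + (i - p) = i)] at h2
    exact h2
  · rw [if_neg (by omega), if_neg (by omega), if_neg (by omega), if_pos (by omega)]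
    exact linB2 i h.1 h.2
  · rw [if_neg (by omega), if_neg (by omega), if_neg (by omega), if_neg (by omega),
       if_pos (by omega)]
    have h1 : v (x + (i - pC)) = pC + (i - pC) := by
      rw [linA2 (x + (i - pC)) (by omega) (by omega)]
      omega
    have h2 : v (v (x + (i - pC))) = x + (i - pC) := hinv (x + (i - pC)) (by omega)
    rw [h1, (by omega : pC + (i - pC) = i)] at h2
    exact h2
  · rw [if_neg (by omega), if_neg (by omega), if_neg (by omega), if_neg (by omega),
       if_neg (by omega)]
    have h1 : v (p + x + (i - (pC + y))) = i := by
      rw [linB2 (p + x + (i - (pC + y))) (by omega) (by omega)]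
      omega
    have h2 := hinv (p + x + (i - (pC + y))) (by omega)
    rw [h1] at h2
    exact h2
lemma perm_val_facts {n : ℕ} (π : Equiv.Perm (Fin (2*n))) (hsq : π * π = 1) (hfpf : ∀ i, π i ≠ i) :
    (∀ i, i < 2*n → permVal π i < 2*n) ∧
    (∀ i, i < 2*n → permVal π (permVal π i) = i) ∧
    (∀ i, i < 2*n → permVal π i ≠ i) ∧
    (∀ i j, i < 2*n → j < 2*n → permVal π i = permVal π j → i = j) := by
  have happ : ∀ x : Fin (2*n), π (π x) = x := by
    intro x
    have := congrArg (fun σ : Equiv.Perm (Fin (2*n)) => σ x) hsq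
    simpa [Equiv.Perm.mul_apply] using this
  refine ⟨?_, ?_, ?_, ?_⟩
  · intro i hi
    rw [permVal, dif_pos hi]
    exact (π ⟨i, hi⟩).isLt
  · intro i hi
    have h2 : (π ⟨i, hi⟩ : ℕ) < 2*n := (π ⟨i, hi⟩).isLt
    have hval : permVal π i = ((π ⟨i, hi⟩ : Fin (2*n)) : ℕ) := by rw [permVal, dif_pos hi]
    rw [hval, permVal, dif_pos h2]
    have he : (⟨(π ⟨i, hi⟩ : ℕ), h2⟩ : Fin (2*n)) = π ⟨i, hi⟩ := rfl
    rw [he, happ]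
  · intro i hi hc
    rw [permVal, dif_pos hi] at hc
    exact hfpf ⟨i, hi⟩ (Fin.ext hc)
  · intro i j hi hj hij
    rw [permVal, dif_pos hi, permVal, dif_pos hj] at hij
    have := π.injective (Fin.ext hij)
    exact congrArg Fin.val this

lemma two_desc_eq {n : ℕ} (π π' : Equiv.Perm (Fin (2*n)))
    (hsq : π * π = 1) (hfpf : ∀ i, π i ≠ i)
    (hsq' : π' * π' = 1) (hfpf' : ∀ i, π' i ≠ i)
    (d1 d2 : ℕ) (hd12 : d1 < d2) (hd2 : d2 < 2*n - 1)
    (hD : ∀ i, i < 2*n - 1 → (permVal π (i+1) < permVal π i ↔ (i = d1 ∨ i = d2)))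
    (hD' : ∀ i, i < 2*n - 1 → (permVal π' (i+1) < permVal π' i ↔ (i = d1 ∨ i = d2))) :
    π = π' := by
  have hn : 1 ≤ n := by omega
  obtain ⟨hlt, hinv, hne, hinj⟩ := perm_val_facts π hsq hfpf
  obtain ⟨hlt', hinv', hne', hinj'⟩ := perm_val_facts π' hsq' hfpf'
  have hasc : ∀ (v : ℕ → ℕ),
      (∀ i j, i < 2*n → j < 2*n → v i = v j → i = j) →
      (∀ i, i < 2*n - 1 → (v (i+1) < v i ↔ (i = d1 ∨ i = d2))) →
      ∀ i, i < 2*n - 1 → i ≠ d1 → i ≠ d2 → v i < v (i+1) := by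
    intro v vinj vD i hi h1 h2
    have hnd : ¬ (v (i+1) < v i) := by
      rw [vD i hi]
      push_neg
      exact ⟨h1, h2⟩
    have : v i ≠ v (i+1) := fun hc => by
      have := vinj i (i+1) (by omega) (by omega) hc
      omega
    omega
  have mkblocks : ∀ (v : ℕ → ℕ),
      (∀ i, i < 2*n → v i < 2*n) →
      (∀ i, i < 2*n → v (v i) = i) →
      (∀ i, i < 2*n → v i ≠ i) →
      (∀ i, i < 2*n - 1 → i ≠ d1 → i ≠ d2 → v i < v (i+1)) →
      ∃ x y z, x + y = d1 + 1 ∧ x + z = (d2+1) - (d1+1) ∧ y + z = 2*n - (d2+1) ∧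
      ∀ i, i < 2*n → v i =
        (if i < x then (d1+1) + i
         else if i < d1+1 then (d2+1) + (i - x)
         else if i < (d1+1) + x then i - (d1+1)
         else if i < d2+1 then (d2+1) + y + (i - ((d1+1) + x))
         else if i < (d2+1) + y then x + (i - (d2+1))
         else (d1+1) + x + (i - ((d2+1) + y))) := by
    intro v vlt vinv vne vasc
    apply canonical (2*n) (d1+1) (d2+1) v (by omega) (by omega) (by omega) vlt vinv vne
    · intro i j hij hj
      exact block_strict_mono (lo := 0) (hi := d1)
        (fun t ht1 ht2 => vasc t (by omega) (by omega) (by omega)) i j (by omega) hij (by omega)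
    · intro i j hi hij hj
      exact block_strict_mono (lo := d1+1) (hi := d2)
        (fun t ht1 ht2 => vasc t (by omega) (by omega) (by omega)) i j hi hij (by omega)
    · intro i j hi hij hj
      exact block_strict_mono (lo := d2+1) (hi := 2*n-1)
        (fun t ht1 ht2 => vasc t (by omega) (by omega) (by omega)) i j hi hij (by omega)
  obtain ⟨x, y, z, e1, e2, e3, hF⟩ :=
    mkblocks (permVal π) hlt hinv hne (hasc _ hinj hD)
  obtain ⟨x', y', z', e1', e2', e3', hF'⟩ :=
    mkblocks (permVal π') hlt' hinv' hne' (hasc _ hinj' hD')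
  obtain rfl : x' = x := by omega
  obtain rfl : y' = y := by omega
  apply Equiv.ext
  intro q
  apply Fin.ext
  have hv : (π q : ℕ) = permVal π q.1 := by rw [permVal, dif_pos q.isLt]
  have hv' : (π' q : ℕ) = permVal π' q.1 := by rw [permVal, dif_pos q.isLt]
  rw [hv, hv', hF q.1 q.isLt, hF' q.1 q.isLt]

lemma matchingDes_two {n : ℕ} : matchingDes n 2 ≤ (2*n - 1).choose 2 := by
  classical
  have hc : ((Finset.range (2*n-1)).powersetCard 2).card = (2*n-1).choose 2 := by
    rw [Finset.card_powersetCard, Finset.card_range]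
  rw [matchingDes, ← hc]
  apply Finset.card_le_card_of_injOn
    (fun π => (Finset.range (2*n-1)).filter (fun i => permVal π (i+1) < permVal π i))
  · intro π hπ
    simp only [Finset.mem_coe, Finset.mem_filter, Finset.mem_univ, true_and] at hπ
    obtain ⟨_, _, hdes⟩ := hπ
    rw [Finset.mem_coe, Finset.mem_powersetCard]
    exact ⟨Finset.filter_subset _ _, hdes⟩
  · intro π hπ π' hπ' heq
    dsimp only at heq
    simp only [Finset.mem_coe, Finset.mem_filter, Finset.mem_univ, true_and] at hπ hπ'
    obtain ⟨hsq, hfpf, hdes⟩ := hπ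
    obtain ⟨hsq', hfpf', hdes'⟩ := hπ'
    rw [des] at hdes hdes'
    obtain ⟨a, b, hab, hset⟩ := Finset.card_eq_two.mp hdes
    have hmema : a ∈ (Finset.range (2*n-1)).filter (fun i => permVal π (i+1) < permVal π i) := by
      rw [hset]; simp
    have hmemb : b ∈ (Finset.range (2*n-1)).filter (fun i => permVal π (i+1) < permVal π i) := by
      rw [hset]; simp
    rw [Finset.mem_filter, Finset.mem_range] at hmema hmemb
    have hchar : ∀ i, i < 2*n - 1 → (permVal π (i+1) < permVal π i ↔ (i = a ∨ i = b)) := by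
      intro i hi
      constructor
      · intro h
        have : i ∈ (Finset.range (2*n-1)).filter (fun i => permVal π (i+1) < permVal π i) := by
          rw [Finset.mem_filter, Finset.mem_range]; exact ⟨hi, h⟩
        rw [hset] at this
        simpa using this
      · rintro (rfl | rfl)
        · exact hmema.2
        · exact hmemb.2
    have hchar' : ∀ i, i < 2*n - 1 → (permVal π' (i+1) < permVal π' i ↔ (i = a ∨ i = b)) := by
      intro i hi
      constructor
      · intro h
        have : i ∈ (Finset.range (2*n-1)).filter (fun i => permVal π' (i+1) < permVal π' i) := by
          rw [Finset.mem_filter, Finset.mem_range]; exact ⟨hi, h⟩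
        rw [← heq, hset] at this
        simpa using this
      · intro h
        have hmem : i ∈ (Finset.range (2*n-1)).filter (fun i => permVal π' (i+1) < permVal π' i) := by
          rw [← heq, hset]
          rcases h with rfl | rfl <;> simp
        rw [Finset.mem_filter] at hmem
        exact hmem.2
    rcases Nat.lt_or_ge a b with hab2 | hab2
    · exact two_desc_eq π π' hsq hfpf hsq' hfpf' a b hab2 hmemb.1
        (fun i hi => by rw [hchar i hi]) (fun i hi => by rw [hchar' i hi])
    · have hba : b < a := by omega
      exact two_desc_eq π π' hsq hfpf hsq' hfpf' b a hba hmema.1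
        (fun i hi => by rw [hchar i hi]; tauto) (fun i hi => by rw [hchar' i hi]; tauto)
/-- For all sufficiently large `n`, the sequence `(J_{2n,k})_k` of descent counts of
fixed-point-free involutions is not log-concave. -/
theorem matchings_descents_not_log_concave :
    ∃ N : ℕ, ∀ n : ℕ, N ≤ n → ∃ k : ℕ, 1 ≤ k ∧
      matchingDes n k ^ 2 < matchingDes n (k - 1) * matchingDes n (k + 1) := by
  refine ⟨400000, fun n hn => ⟨2, by omega, ?_⟩⟩
  have h1 : 1 ≤ matchingDes n 1 := matchingDes_one (by omega)
  have h3 : (n/6)^5 ≤ matchingDes n 3 := matchingDes_three (by omega)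
  have h2 : matchingDes n 2 ≤ (2*n - 1).choose 2 := matchingDes_two
  have h2' : matchingDes n 2 ≤ 2*n^2 := by
    refine le_trans h2 ?_
    rw [Nat.choose_two_right]
    calc (2*n-1) * ((2*n-1) - 1) / 2 ≤ (2*n) * (2*n) / 2 :=
          Nat.div_le_div_right (Nat.mul_le_mul (by omega) (by omega))
      _ = 2*n^2 := by
          rw [show (2*n) * (2*n) = (2*n^2) * 2 by ring, Nat.mul_div_cancel _ (by norm_num)]
  set q := n / 6 with hq
  have hq1 : 58565 ≤ q := by omega
  have hn7 : n ≤ 11 * q := by omega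
  have key : (2*n^2)^2 < q^5 := by
    calc (2*n^2)^2 = 4*n^4 := by ring
      _ ≤ 4*(11*q)^4 := Nat.mul_le_mul_left 4 (Nat.pow_le_pow_left hn7 4)
      _ = 58564*q^4 := by ring
      _ < q*q^4 := by
          have hpos : 0 < q^4 := by positivity
          exact (Nat.mul_lt_mul_right hpos).mpr (by omega)
      _ = q^5 := by ring
  have final : matchingDes n 2 ^ 2 < matchingDes n 1 * matchingDes n 3 := by
    calc matchingDes n 2 ^ 2 ≤ (2*n^2)^2 := Nat.pow_le_pow_left h2' 2
      _ < q^5 := key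
      _ ≤ matchingDes n 3 := h3
      _ ≤ matchingDes n 1 * matchingDes n 3 := Nat.le_mul_of_pos_left _ (by omega)
  simpa using final
end

section
/- For a uniformly random permutation π of S_n (n ≥ 2), let D_n = des(π) and D'_n = des(π⁻¹). Then the covariance of D_n and D'_n equals (n−1)/(2n); that is, (1/n!) Σ_{π ∈ S_n} des(π)·des(π⁻¹) − ((n−1)/2)² = (n−1)/(2n). -/
open Finset

section Aux

open Equiv


lemma card_fix_two {n : ℕ} (a b : Fin n) (hab : a ≠ b) :
    (univ.filter fun σ : Equiv.Perm (Fin n) => σ a = a ∧ σ b = b).card = (n - 2).factorial := by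
  rw [← Fintype.card_subtype]
  have e1 : {σ : Equiv.Perm (Fin n) // σ a = a ∧ σ b = b} ≃
      {σ : Equiv.Perm (Fin n) // ∀ x, ¬(x ≠ a ∧ x ≠ b) → σ x = x} := by
    apply Equiv.subtypeEquivRight
    intro σ
    constructor
    · rintro ⟨h1, h2⟩ x hx
      push_neg at hx
      rcases eq_or_ne x a with rfl | hxa
      · exact h1
      · rw [hx hxa]; exact h2
    · intro h
      exact ⟨h a (by simp), h b (by simp)⟩
  have e2 : Equiv.Perm {x : Fin n // x ≠ a ∧ x ≠ b} ≃
      {σ : Equiv.Perm (Fin n) // ∀ x, ¬(x ≠ a ∧ x ≠ b) → σ x = x} :=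
    Equiv.Perm.subtypeEquivSubtypePerm (fun x : Fin n => x ≠ a ∧ x ≠ b)
  have hc : Fintype.card {σ : Equiv.Perm (Fin n) // σ a = a ∧ σ b = b}
      = Fintype.card (Equiv.Perm {x : Fin n // x ≠ a ∧ x ≠ b}) :=
    Fintype.card_congr (e1.trans e2.symm)
  rw [hc, Fintype.card_perm]
  congr 1
  rw [Fintype.card_subtype]
  have : (univ.filter fun x : Fin n => x ≠ a ∧ x ≠ b) = univ \ {a, b} := by
    ext x; simp [not_or]
  rw [this, card_sdiff_of_subset (by simp), card_univ, Fintype.card_fin]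
  rw [card_insert_of_notMem (by simpa using hab), card_singleton]

lemma card_map_two {n : ℕ} (a b c d : Fin n) (hab : a ≠ b) (hcd : c ≠ d) :
    (univ.filter fun σ : Equiv.Perm (Fin n) => σ a = c ∧ σ b = d).card = (n - 2).factorial := by
  obtain ⟨g, hga, hgb⟩ : ∃ g : Equiv.Perm (Fin n), g a = c ∧ g b = d := by
    refine ⟨Equiv.swap (Equiv.swap a c b) d * Equiv.swap a c, ?_, ?_⟩
    · have h1 : Equiv.swap a c b ≠ c := by
        intro h
        exact hab (Equiv.swap a c |>.injective (by simp [h]))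
      simp [Equiv.swap_apply_of_ne_of_ne h1.symm hcd]
    · simp
  rw [← card_fix_two a b hab]
  apply Finset.card_bij' (fun σ _ => g⁻¹ * σ) (fun τ _ => g * τ)
  · intro σ hσ
    simp only [mem_filter, mem_univ, true_and] at hσ ⊢
    simp [Equiv.Perm.mul_apply, hσ.1, hσ.2, ← hga, ← hgb]
  · intro τ hτ
    simp only [mem_filter, mem_univ, true_and] at hτ ⊢
    simp [Equiv.Perm.mul_apply, hτ.1, hτ.2, hga, hgb]
  · intro σ _; group
  · intro τ _; group


lemma not_lt_iff_of_ne {n : ℕ} {x y : Fin n} (h : x ≠ y) : ¬ x < y ↔ y < x := by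
  rw [not_lt, lt_iff_le_and_ne]
  simp [h.symm]

lemma swap_adj_lt_iff {n : ℕ} (kk kk1 x y : Fin n) (hadj : (kk1 : ℕ) = (kk : ℕ) + 1)
    (h1 : ¬(x = kk ∧ y = kk1)) (h2 : ¬(y = kk ∧ x = kk1)) :
    (Equiv.swap kk kk1 x < Equiv.swap kk kk1 y ↔ x < y) := by
  simp only [Equiv.swap_apply_def]
  split_ifs <;> simp only [Fin.lt_def, Fin.ext_iff, not_and] at * <;> omega

lemma key_count {n : ℕ} (ii ii1 jj jj1 : Fin n) (hi : (ii1 : ℕ) = (ii : ℕ) + 1)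
    (hj : (jj1 : ℕ) = (jj : ℕ) + 1) :
    4 * (univ.filter fun π : Equiv.Perm (Fin n) => π ii1 < π ii ∧ π⁻¹ jj1 < π⁻¹ jj).card
      = n.factorial + 2 * (n - 2).factorial := by
  have hii : ii ≠ ii1 := fun h => by rw [h] at hi; omega
  have hjj : jj ≠ jj1 := fun h => by rw [h] at hj; omega
  have hiilt : ii < ii1 := by rw [Fin.lt_def]; omega
  have hjjlt : jj < jj1 := by rw [Fin.lt_def]; omega
  -- Step B : 2 * |Q| = n!
  have hQtoggle : ∀ π : Equiv.Perm (Fin n),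
      ((Equiv.swap jj jj1 * π)⁻¹ jj1 < (Equiv.swap jj jj1 * π)⁻¹ jj) ↔ ¬ (π⁻¹ jj1 < π⁻¹ jj) := by
    intro π
    simp only [mul_inv_rev, Equiv.swap_inv, Equiv.Perm.mul_apply,
      Equiv.swap_apply_left, Equiv.swap_apply_right]
    exact (not_lt_iff_of_ne (fun h => hjj (π⁻¹.injective h).symm)).symm
  have hBeq : (univ.filter fun π : Equiv.Perm (Fin n) => π⁻¹ jj1 < π⁻¹ jj).card
      = (univ.filter fun π : Equiv.Perm (Fin n) => ¬ (π⁻¹ jj1 < π⁻¹ jj)).card := by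
    apply Finset.card_bij' (fun π _ => Equiv.swap jj jj1 * π) (fun π _ => Equiv.swap jj jj1 * π)
    · intro π hπ
      simp only [mem_filter, mem_univ, true_and] at hπ ⊢
      rw [hQtoggle]
      simpa using hπ
    · intro π hπ
      simp only [mem_filter, mem_univ, true_and] at hπ ⊢
      rw [← hQtoggle π] at hπ
      exact hπ
    · intro π _; rw [← mul_assoc, Equiv.swap_mul_self, one_mul]
    · intro π _; rw [← mul_assoc, Equiv.swap_mul_self, one_mul]
  have hB2 : 2 * (univ.filter fun π : Equiv.Perm (Fin n) => π⁻¹ jj1 < π⁻¹ jj).card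
      = n.factorial := by
    have := Finset.card_filter_add_card_filter_not
      (s := (univ : Finset (Equiv.Perm (Fin n))))
      (p := fun π : Equiv.Perm (Fin n) => π⁻¹ jj1 < π⁻¹ jj)
    rw [← hBeq] at this
    rw [two_mul, this, card_univ, Fintype.card_perm, Fintype.card_fin]
  -- R implies P and Q
  have hRPQ : ∀ π : Equiv.Perm (Fin n), (π ii = jj1 ∧ π ii1 = jj) →
      (π ii1 < π ii ∧ π⁻¹ jj1 < π⁻¹ jj) := by
    intro π ⟨h1, h2⟩
    have e1 : π⁻¹ jj1 = ii := by rw [← h1]; simp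
    have e2 : π⁻¹ jj = ii1 := by rw [← h2]; simp
    refine ⟨?_, ?_⟩
    · rw [h1, h2]; exact hjjlt
    · rw [e1, e2]; exact hiilt
  -- split : |P ∧ Q| = |P ∧ Q ∧ ¬R| + (n-2)!
  have hsplit : (univ.filter fun π : Equiv.Perm (Fin n) =>
        π ii1 < π ii ∧ π⁻¹ jj1 < π⁻¹ jj).card
      = (univ.filter fun π : Equiv.Perm (Fin n) =>
          (π ii1 < π ii ∧ π⁻¹ jj1 < π⁻¹ jj) ∧ ¬ (π ii = jj1 ∧ π ii1 = jj)).card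
        + (n - 2).factorial := by
    have h := Finset.card_filter_add_card_filter_not
      (s := (univ.filter fun π : Equiv.Perm (Fin n) => π ii1 < π ii ∧ π⁻¹ jj1 < π⁻¹ jj))
      (p := fun π : Equiv.Perm (Fin n) => π ii = jj1 ∧ π ii1 = jj)
    rw [Finset.filter_filter, Finset.filter_filter] at h
    have hfR : (univ.filter fun π : Equiv.Perm (Fin n) =>
          (π ii1 < π ii ∧ π⁻¹ jj1 < π⁻¹ jj) ∧ (π ii = jj1 ∧ π ii1 = jj))
        = univ.filter fun π : Equiv.Perm (Fin n) => π ii = jj1 ∧ π ii1 = jj := by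
      apply Finset.filter_congr
      intro π _
      exact ⟨fun h => h.2, fun h => ⟨hRPQ π h, h⟩⟩
    rw [hfR, card_map_two ii ii1 jj1 jj hii (fun h => hjj h.symm)] at h
    omega
  -- bijection between |P ∧ Q ∧ ¬R| and |¬P ∧ Q|
  have hinv : ∀ π : Equiv.Perm (Fin n), ∀ x,
      (π * Equiv.swap ii ii1)⁻¹ x = Equiv.swap ii ii1 (π⁻¹ x) := by
    intro π x
    rw [mul_inv_rev, Equiv.swap_inv, Equiv.Perm.mul_apply]
  have hT : (univ.filter fun π : Equiv.Perm (Fin n) =>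
        (π ii1 < π ii ∧ π⁻¹ jj1 < π⁻¹ jj) ∧ ¬ (π ii = jj1 ∧ π ii1 = jj)).card
      = (univ.filter fun π : Equiv.Perm (Fin n) =>
          ¬ (π ii1 < π ii) ∧ π⁻¹ jj1 < π⁻¹ jj).card := by
    apply Finset.card_bij' (fun π _ => π * Equiv.swap ii ii1) (fun π _ => π * Equiv.swap ii ii1)
    · intro π hπ
      simp only [mem_filter, mem_univ, true_and] at hπ ⊢
      obtain ⟨⟨hPπ, hQπ⟩, hRπ⟩ := hπ
      constructor
      · simp only [Equiv.Perm.mul_apply, Equiv.swap_apply_left, Equiv.swap_apply_right]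
        exact hPπ.asymm
      · rw [hinv, hinv]
        rw [swap_adj_lt_iff ii ii1 _ _ hi ?_ ?_]
        · exact hQπ
        · rintro ⟨e1, e2⟩
          exact hRπ ⟨by rw [← e1]; simp, by rw [← e2]; simp⟩
        · rintro ⟨e1, e2⟩
          have c1 : π ii = jj := by rw [← e1]; simp
          have c2 : π ii1 = jj1 := by rw [← e2]; simp
          rw [c1, c2] at hPπ
          exact hjjlt.asymm hPπ
    · intro σ hσ
      simp only [mem_filter, mem_univ, true_and] at hσ ⊢
      obtain ⟨hPσ, hQσ⟩ := hσ
      have hPσ' : σ ii < σ ii1 :=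
        (not_lt_iff_of_ne (fun h => hii (σ.injective h).symm)).mp hPσ
      refine ⟨⟨?_, ?_⟩, ?_⟩
      · simp only [Equiv.Perm.mul_apply, Equiv.swap_apply_left, Equiv.swap_apply_right]
        exact hPσ'
      · rw [hinv, hinv]
        rw [swap_adj_lt_iff ii ii1 _ _ hi ?_ ?_]
        · exact hQσ
        · rintro ⟨e1, e2⟩
          have c1 : σ ii = jj1 := by rw [← e1]; simp
          have c2 : σ ii1 = jj := by rw [← e2]; simp
          rw [c1, c2] at hPσ'
          exact hjjlt.asymm hPσ'
        · rintro ⟨e1, e2⟩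
          rw [e1, e2] at hQσ
          exact hiilt.asymm hQσ
      · simp only [Equiv.Perm.mul_apply, Equiv.swap_apply_left, Equiv.swap_apply_right]
        rintro ⟨e1, e2⟩
        have c1 : σ⁻¹ jj1 = ii1 := by rw [← e1]; simp
        have c2 : σ⁻¹ jj = ii := by rw [← e2]; simp
        rw [c1, c2] at hQσ
        exact hiilt.asymm hQσ
    · intro π _
      rw [mul_assoc, Equiv.swap_mul_self, mul_one]
    · intro π _
      rw [mul_assoc, Equiv.swap_mul_self, mul_one]
  -- splitting Q by P
  have hQsplit : (univ.filter fun π : Equiv.Perm (Fin n) => π⁻¹ jj1 < π⁻¹ jj).card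
      = (univ.filter fun π : Equiv.Perm (Fin n) => π ii1 < π ii ∧ π⁻¹ jj1 < π⁻¹ jj).card
        + (univ.filter fun π : Equiv.Perm (Fin n) =>
            ¬ (π ii1 < π ii) ∧ π⁻¹ jj1 < π⁻¹ jj).card := by
    have h := Finset.card_filter_add_card_filter_not
      (s := (univ.filter fun π : Equiv.Perm (Fin n) => π⁻¹ jj1 < π⁻¹ jj))
      (p := fun π : Equiv.Perm (Fin n) => π ii1 < π ii)
    rw [Finset.filter_filter, Finset.filter_filter] at h
    have e1 : (univ.filter fun π : Equiv.Perm (Fin n) => π⁻¹ jj1 < π⁻¹ jj ∧ π ii1 < π ii)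
        = univ.filter fun π : Equiv.Perm (Fin n) => π ii1 < π ii ∧ π⁻¹ jj1 < π⁻¹ jj := by
      apply Finset.filter_congr; intro π _; exact and_comm
    have e2 : (univ.filter fun π : Equiv.Perm (Fin n) => π⁻¹ jj1 < π⁻¹ jj ∧ ¬ (π ii1 < π ii))
        = univ.filter fun π : Equiv.Perm (Fin n) => ¬ (π ii1 < π ii) ∧ π⁻¹ jj1 < π⁻¹ jj := by
      apply Finset.filter_congr; intro π _; exact and_comm
    rw [e1, e2] at h
    omega
  omega

end Aux

/-- The covariance of `des(π)` and `des(π⁻¹)` for a uniformly random permutation `π`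
of `S_n` is `(n-1)/(2n)`. -/
theorem descents_inverse_covariance (n : ℕ) (hn : 2 ≤ n) :
    (∑ π : Equiv.Perm (Fin n), (des π : ℚ) * (des π⁻¹ : ℚ)) / (Nat.factorial n : ℚ)
        - (((n : ℚ) - 1) / 2) ^ 2 = ((n : ℚ) - 1) / (2 * (n : ℚ)) := by
  obtain ⟨m, rfl⟩ : ∃ m, n = m + 2 := ⟨n - 2, by omega⟩
  have hdes : ∀ π : Equiv.Perm (Fin (m + 2)), (des π : ℚ)
      = ∑ i ∈ range (m + 1), if permVal π (i + 1) < permVal π i then (1 : ℚ) else 0 := by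
    intro π
    rw [des, show m + 2 - 1 = m + 1 from rfl, Finset.card_filter]
    push_cast
    rfl
  have hsum : (∑ π : Equiv.Perm (Fin (m + 2)), (des π : ℚ) * (des π⁻¹ : ℚ))
      = ∑ i ∈ range (m + 1), ∑ j ∈ range (m + 1),
          ((univ.filter fun π : Equiv.Perm (Fin (m + 2)) =>
            permVal π (i + 1) < permVal π i ∧ permVal π⁻¹ (j + 1) < permVal π⁻¹ j).card : ℚ) := by
    have h1 : (∑ π : Equiv.Perm (Fin (m + 2)), (des π : ℚ) * (des π⁻¹ : ℚ))
        = ∑ π : Equiv.Perm (Fin (m + 2)), ∑ i ∈ range (m + 1), ∑ j ∈ range (m + 1),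
            (if permVal π (i + 1) < permVal π i then (1 : ℚ) else 0)
            * (if permVal π⁻¹ (j + 1) < permVal π⁻¹ j then (1 : ℚ) else 0) := by
      refine Finset.sum_congr rfl fun π _ => ?_
      rw [hdes, hdes, Finset.sum_mul_sum]
    rw [h1, Finset.sum_comm]
    refine Finset.sum_congr rfl fun i _ => ?_
    rw [Finset.sum_comm]
    refine Finset.sum_congr rfl fun j _ => ?_
    rw [← Finset.sum_boole]
    refine Finset.sum_congr rfl fun π _ => ?_
    split_ifs <;> simp_all
  have hcard : ∀ i ∈ range (m + 1), ∀ j ∈ range (m + 1),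
      ((univ.filter fun π : Equiv.Perm (Fin (m + 2)) =>
         permVal π (i + 1) < permVal π i ∧ permVal π⁻¹ (j + 1) < permVal π⁻¹ j).card : ℚ)
      = (((m + 2).factorial : ℚ) + 2 * (m.factorial : ℚ)) / 4 := by
    intro i hi j hj
    rw [mem_range] at hi hj
    have hi1 : i + 1 < m + 2 := by omega
    have hi0 : i < m + 2 := by omega
    have hj1 : j + 1 < m + 2 := by omega
    have hj0 : j < m + 2 := by omega
    have hpred : ∀ π : Equiv.Perm (Fin (m + 2)),
        (permVal π (i + 1) < permVal π i ∧ permVal π⁻¹ (j + 1) < permVal π⁻¹ j)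
        ↔ (π ⟨i + 1, hi1⟩ < π ⟨i, hi0⟩ ∧ π⁻¹ ⟨j + 1, hj1⟩ < π⁻¹ ⟨j, hj0⟩) := by
      intro π
      have e1 : permVal π (i + 1) = (π ⟨i + 1, hi1⟩ : ℕ) := dif_pos hi1
      have e2 : permVal π i = (π ⟨i, hi0⟩ : ℕ) := dif_pos hi0
      have e3 : permVal π⁻¹ (j + 1) = (π⁻¹ ⟨j + 1, hj1⟩ : ℕ) := dif_pos hj1
      have e4 : permVal π⁻¹ j = (π⁻¹ ⟨j, hj0⟩ : ℕ) := dif_pos hj0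
      rw [e1, e2, e3, e4, ← Fin.lt_def, ← Fin.lt_def]
    have hfilt : (univ.filter fun π : Equiv.Perm (Fin (m + 2)) =>
          permVal π (i + 1) < permVal π i ∧ permVal π⁻¹ (j + 1) < permVal π⁻¹ j)
        = univ.filter fun π : Equiv.Perm (Fin (m + 2)) =>
          π ⟨i + 1, hi1⟩ < π ⟨i, hi0⟩ ∧ π⁻¹ ⟨j + 1, hj1⟩ < π⁻¹ ⟨j, hj0⟩ :=
      Finset.filter_congr fun π _ => hpred π
    rw [hfilt]
    have h4 := key_count (n := m + 2) ⟨i, hi0⟩ ⟨i + 1, hi1⟩ ⟨j, hj0⟩ ⟨j + 1, hj1⟩ rfl rfl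
    rw [show m + 2 - 2 = m from rfl] at h4
    have h4' : (4 : ℚ) * ((univ.filter fun π : Equiv.Perm (Fin (m + 2)) =>
          π ⟨i + 1, hi1⟩ < π ⟨i, hi0⟩ ∧ π⁻¹ ⟨j + 1, hj1⟩ < π⁻¹ ⟨j, hj0⟩).card : ℚ)
        = ((m + 2).factorial : ℚ) + 2 * (m.factorial : ℚ) := by
      exact_mod_cast congrArg (Nat.cast : ℕ → ℚ) h4
    linarith
  rw [hsum, Finset.sum_congr rfl (fun i hi => Finset.sum_congr rfl (hcard i hi))]
  rw [Finset.sum_const, Finset.sum_const, card_range, nsmul_eq_mul, nsmul_eq_mul]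
  have hfac : ((m + 2).factorial : ℚ) = ((m : ℚ) + 2) * ((m : ℚ) + 1) * (m.factorial : ℚ) := by
    rw [Nat.factorial_succ, Nat.factorial_succ]
    push_cast
    ring
  have hfne : (m.factorial : ℚ) ≠ 0 := by
    exact_mod_cast m.factorial_ne_zero
  rw [hfac]
  push_cast
  have hm1 : (m : ℚ) + 1 ≠ 0 := by positivity
  have hm2 : (m : ℚ) + 2 ≠ 0 := by positivity
  field_simp
  ring
end

section
/- For a uniformly random permutation π of S_n, let D_n = des(π) and D'_n = des(π⁻¹). Then E[ (D_n − (n−1)/2)² · (D'_n − (n−1)/2)² ] is of order n²; that is, there exists a constant C > 0 such that for all n ≥ 1, (1/n!) Σ_{π ∈ S_n} (des(π) − (n−1)/2)² (des(π⁻¹) − (n−1)/2)² ≤ C·n². -/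
open Finset

noncomputable def Yc {n : ℕ} (i : ℕ) (π : Equiv.Perm (Fin n)) : ℝ :=
  (if permVal π (i + 1) < permVal π i then (1 : ℝ) else 0) - 1 / 2

lemma permVal_lt {n : ℕ} (π : Equiv.Perm (Fin n)) {t : ℕ} (h : t < n) :
    permVal π t = (π ⟨t, h⟩ : ℕ) := dif_pos h

lemma Yc_abs {n : ℕ} (i : ℕ) (π : Equiv.Perm (Fin n)) : |Yc i π| ≤ 1 := by
  unfold Yc; split <;> rw [abs_le] <;> constructor <;> norm_num

lemma des_sub {n : ℕ} (hn : 1 ≤ n) (π : Equiv.Perm (Fin n)) :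
    (des π : ℝ) - ((n : ℝ) - 1) / 2 = ∑ i ∈ range (n - 1), Yc i π := by
  have h1 : (des π : ℝ) = ∑ i ∈ range (n - 1),
      (if permVal π (i + 1) < permVal π i then (1 : ℝ) else 0) := by
    rw [des, Finset.card_filter]
    push_cast
    rfl
  unfold Yc
  rw [Finset.sum_sub_distrib, ← h1, Finset.sum_const, card_range]
  have : ((n - 1 : ℕ) : ℝ) = (n : ℝ) - 1 := by
    have := Nat.cast_sub hn (R := ℝ); simpa using this
  rw [nsmul_eq_mul, this]
  ring

lemma T_zero {n : ℕ} {i j k l : ℕ} (hi : i < n - 1) (hj : j < n - 1) (hk : k < n - 1)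
    (hl : l < n - 1)
    (hij : i + 2 ≤ j ∨ j + 2 ≤ i) (hik : i + 2 ≤ k ∨ k + 2 ≤ i)
    (hil : i + 2 ≤ l ∨ l + 2 ≤ i) :
    ∑ π : Equiv.Perm (Fin n), Yc i π * Yc j π * Yc k π * Yc l π = 0 := by
  have hi1 : i < n := by omega
  have hi2 : i + 1 < n := by omega
  set a : Fin n := ⟨i, hi1⟩ with ha
  set b : Fin n := ⟨i + 1, hi2⟩ with hb
  set s : Equiv.Perm (Fin n) := Equiv.swap a b with hs
  have hflip : ∀ π : Equiv.Perm (Fin n), Yc i (π * s) = - Yc i π := by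
    intro π
    have hab : (π a : ℕ) ≠ (π b : ℕ) := by
      intro h
      have : a = b := π.injective (Fin.ext h)
      simp [ha, hb, Fin.ext_iff] at this
    have e1 : permVal (π * s) i = (π b : ℕ) := by
      rw [permVal_lt _ hi1]
      simp [hs, Equiv.Perm.mul_apply, ha]
    have e2 : permVal (π * s) (i + 1) = (π a : ℕ) := by
      rw [permVal_lt _ hi2]
      simp [hs, Equiv.Perm.mul_apply, hb, Equiv.swap_apply_right]
    have e3 : permVal π i = (π a : ℕ) := permVal_lt _ hi1
    have e4 : permVal π (i + 1) = (π b : ℕ) := permVal_lt _ hi2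
    unfold Yc
    rw [e1, e2, e3, e4]
    rcases lt_or_gt_of_ne hab with h | h
    · rw [if_pos h, if_neg (by omega)]; ring
    · rw [if_neg (by omega), if_pos h]; ring
  have hfix : ∀ m, m < n - 1 → (i + 2 ≤ m ∨ m + 2 ≤ i) →
      ∀ π : Equiv.Perm (Fin n), Yc m (π * s) = Yc m π := by
    intro m hm hiso π
    have hm1 : m < n := by omega
    have hm2 : m + 1 < n := by omega
    have f1 : s ⟨m, hm1⟩ = ⟨m, hm1⟩ :=
      Equiv.swap_apply_of_ne_of_ne (by simp [ha, Fin.ext_iff]; omega)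
        (by simp [hb, Fin.ext_iff]; omega)
    have f2 : s ⟨m + 1, hm2⟩ = ⟨m + 1, hm2⟩ :=
      Equiv.swap_apply_of_ne_of_ne (by simp [ha, Fin.ext_iff]; omega)
        (by simp [hb, Fin.ext_iff]; omega)
    unfold Yc
    rw [permVal_lt _ hm1, permVal_lt _ hm2, permVal_lt _ hm1, permVal_lt _ hm2]
    simp only [Equiv.Perm.mul_apply, f1, f2]
  have key : ∑ π : Equiv.Perm (Fin n), Yc i π * Yc j π * Yc k π * Yc l π
      = ∑ π : Equiv.Perm (Fin n), Yc i (π * s) * Yc j (π * s) * Yc k (π * s) * Yc l (π * s) :=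
    (Fintype.sum_equiv (Equiv.mulRight s) _ _ (fun π => rfl)).symm
  have neg : ∀ π : Equiv.Perm (Fin n),
      Yc i (π * s) * Yc j (π * s) * Yc k (π * s) * Yc l (π * s)
        = - (Yc i π * Yc j π * Yc k π * Yc l π) := by
    intro π
    rw [hflip, hfix j hj hij, hfix k hk hik, hfix l hl hil]
    ring
  have h2 : ∑ π : Equiv.Perm (Fin n),
        Yc i (π * s) * Yc j (π * s) * Yc k (π * s) * Yc l (π * s)
      = - ∑ π : Equiv.Perm (Fin n), Yc i π * Yc j π * Yc k π * Yc l π := by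
    rw [Finset.sum_congr rfl (fun π _ => neg π), Finset.sum_neg_distrib]
  linarith [key.trans h2]

example : True := trivial

lemma expand_pow4 (R : Finset ℕ) (g : ℕ → ℝ) :
    (∑ i ∈ R, g i) ^ 4
      = ∑ q ∈ (R ×ˢ R) ×ˢ (R ×ˢ R), g q.1.1 * g q.1.2 * g q.2.1 * g q.2.2 := by
  have h2 : ∀ f : ℕ × ℕ → ℝ, ∀ S : Finset (ℕ × ℕ),
      (∑ p ∈ S, f p) ^ 2 = ∑ q ∈ S ×ˢ S, f q.1 * f q.2 := by
    intro f S
    rw [sq, Finset.sum_mul_sum, ← Finset.sum_product']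
  have h1 : (∑ i ∈ R, g i) ^ 2 = ∑ p ∈ R ×ˢ R, g p.1 * g p.2 := by
    rw [sq, Finset.sum_mul_sum, ← Finset.sum_product']
  have h4 : (∑ i ∈ R, g i) ^ 4 = ((∑ i ∈ R, g i) ^ 2) ^ 2 := by ring
  rw [h4, h1, h2 (fun p => g p.1 * g p.2) (R ×ˢ R)]
  exact Finset.sum_congr rfl fun q _ => by ring

lemma cardB1 (n : ℕ) :
    ((((range (n-1) ×ˢ range (n-1)) ×ˢ (range (n-1) ×ˢ range (n-1))).filter
      (fun q : (ℕ × ℕ) × (ℕ × ℕ) => q.1.1 ≤ q.1.2 + 1 ∧ q.1.2 ≤ q.1.1 + 1 ∧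
        q.2.1 ≤ q.2.2 + 1 ∧ q.2.2 ≤ q.2.1 + 1)).card) ≤ 9 * n ^ 2 := by
  have h := Finset.card_le_card_of_injOn
    (fun q : (ℕ × ℕ) × (ℕ × ℕ) => ((q.1.1, q.1.2 + 1 - q.1.1), (q.2.1, q.2.2 + 1 - q.2.1)))
    (s := (((range (n-1) ×ˢ range (n-1)) ×ˢ (range (n-1) ×ˢ range (n-1))).filter
      (fun q : (ℕ × ℕ) × (ℕ × ℕ) => q.1.1 ≤ q.1.2 + 1 ∧ q.1.2 ≤ q.1.1 + 1 ∧
        q.2.1 ≤ q.2.2 + 1 ∧ q.2.2 ≤ q.2.1 + 1)))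
    (t := (range n ×ˢ range 3) ×ˢ (range n ×ˢ range 3))
    (by
      rintro ⟨⟨i, j⟩, ⟨k, l⟩⟩ hq
      simp only [Finset.mem_coe, Finset.mem_filter, Finset.mem_product, Finset.mem_range] at hq ⊢
      omega)
    (by
      rintro ⟨⟨i, j⟩, ⟨k, l⟩⟩ hq ⟨⟨i', j'⟩, ⟨k', l'⟩⟩ hq' h
      simp only [Finset.coe_filter, Set.mem_setOf_eq, Finset.mem_product,
        Finset.mem_range, Prod.mk.injEq] at hq hq' h
      obtain ⟨⟨h1, h2⟩, ⟨h3, h4⟩⟩ := h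
      simp only [Prod.mk.injEq]
      omega)
  calc _ ≤ ((range n ×ˢ range 3) ×ˢ (range n ×ˢ range 3)).card := h
    _ = 9 * n ^ 2 := by simp [Finset.card_product, card_range]; ring

lemma cardB2 (n : ℕ) :
    ((((range (n-1) ×ˢ range (n-1)) ×ˢ (range (n-1) ×ˢ range (n-1))).filter
      (fun q : (ℕ × ℕ) × (ℕ × ℕ) => q.1.1 ≤ q.2.1 + 1 ∧ q.2.1 ≤ q.1.1 + 1 ∧
        q.1.2 ≤ q.2.2 + 1 ∧ q.2.2 ≤ q.1.2 + 1)).card) ≤ 9 * n ^ 2 := by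
  have h := Finset.card_le_card_of_injOn
    (fun q : (ℕ × ℕ) × (ℕ × ℕ) => ((q.1.1, q.2.1 + 1 - q.1.1), (q.1.2, q.2.2 + 1 - q.1.2)))
    (s := (((range (n-1) ×ˢ range (n-1)) ×ˢ (range (n-1) ×ˢ range (n-1))).filter
      (fun q : (ℕ × ℕ) × (ℕ × ℕ) => q.1.1 ≤ q.2.1 + 1 ∧ q.2.1 ≤ q.1.1 + 1 ∧
        q.1.2 ≤ q.2.2 + 1 ∧ q.2.2 ≤ q.1.2 + 1)))
    (t := (range n ×ˢ range 3) ×ˢ (range n ×ˢ range 3))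
    (by
      rintro ⟨⟨i, j⟩, ⟨k, l⟩⟩ hq
      simp only [Finset.mem_coe, Finset.mem_filter, Finset.mem_product, Finset.mem_range] at hq ⊢
      omega)
    (by
      rintro ⟨⟨i, j⟩, ⟨k, l⟩⟩ hq ⟨⟨i', j'⟩, ⟨k', l'⟩⟩ hq' h
      simp only [Finset.coe_filter, Set.mem_setOf_eq, Finset.mem_product,
        Finset.mem_range, Prod.mk.injEq] at hq hq' h
      obtain ⟨⟨h1, h2⟩, ⟨h3, h4⟩⟩ := h
      simp only [Prod.mk.injEq]
      omega)
  calc _ ≤ ((range n ×ˢ range 3) ×ˢ (range n ×ˢ range 3)).card := h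
    _ = 9 * n ^ 2 := by simp [Finset.card_product, card_range]; ring

lemma cardB3 (n : ℕ) :
    ((((range (n-1) ×ˢ range (n-1)) ×ˢ (range (n-1) ×ˢ range (n-1))).filter
      (fun q : (ℕ × ℕ) × (ℕ × ℕ) => q.1.1 ≤ q.2.2 + 1 ∧ q.2.2 ≤ q.1.1 + 1 ∧
        q.1.2 ≤ q.2.1 + 1 ∧ q.2.1 ≤ q.1.2 + 1)).card) ≤ 9 * n ^ 2 := by
  have h := Finset.card_le_card_of_injOn
    (fun q : (ℕ × ℕ) × (ℕ × ℕ) => ((q.1.1, q.2.2 + 1 - q.1.1), (q.1.2, q.2.1 + 1 - q.1.2)))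
    (s := (((range (n-1) ×ˢ range (n-1)) ×ˢ (range (n-1) ×ˢ range (n-1))).filter
      (fun q : (ℕ × ℕ) × (ℕ × ℕ) => q.1.1 ≤ q.2.2 + 1 ∧ q.2.2 ≤ q.1.1 + 1 ∧
        q.1.2 ≤ q.2.1 + 1 ∧ q.2.1 ≤ q.1.2 + 1)))
    (t := (range n ×ˢ range 3) ×ˢ (range n ×ˢ range 3))
    (by
      rintro ⟨⟨i, j⟩, ⟨k, l⟩⟩ hq
      simp only [Finset.mem_coe, Finset.mem_filter, Finset.mem_product, Finset.mem_range] at hq ⊢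
      omega)
    (by
      rintro ⟨⟨i, j⟩, ⟨k, l⟩⟩ hq ⟨⟨i', j'⟩, ⟨k', l'⟩⟩ hq' h
      simp only [Finset.coe_filter, Set.mem_setOf_eq, Finset.mem_product,
        Finset.mem_range, Prod.mk.injEq] at hq hq' h
      obtain ⟨⟨h1, h2⟩, ⟨h3, h4⟩⟩ := h
      simp only [Prod.mk.injEq]
      omega)
  calc _ ≤ ((range n ×ˢ range 3) ×ˢ (range n ×ˢ range 3)).card := h
    _ = 9 * n ^ 2 := by simp [Finset.card_product, card_range]; ring

lemma cardB4 (n : ℕ) :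
    ((((range (n-1) ×ˢ range (n-1)) ×ˢ (range (n-1) ×ˢ range (n-1))).filter
      (fun q : (ℕ × ℕ) × (ℕ × ℕ) => q.1.2 ≤ q.1.1 + 3 ∧ q.1.1 ≤ q.1.2 + 3 ∧
        q.2.1 ≤ q.1.1 + 3 ∧ q.1.1 ≤ q.2.1 + 3 ∧ q.2.2 ≤ q.1.1 + 3 ∧ q.1.1 ≤ q.2.2 + 3)).card)
      ≤ 343 * n := by
  have h := Finset.card_le_card_of_injOn
    (fun q : (ℕ × ℕ) × (ℕ × ℕ) =>
      ((q.1.1, q.1.2 + 3 - q.1.1), (q.2.1 + 3 - q.1.1, q.2.2 + 3 - q.1.1)))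
    (s := (((range (n-1) ×ˢ range (n-1)) ×ˢ (range (n-1) ×ˢ range (n-1))).filter
      (fun q : (ℕ × ℕ) × (ℕ × ℕ) => q.1.2 ≤ q.1.1 + 3 ∧ q.1.1 ≤ q.1.2 + 3 ∧
        q.2.1 ≤ q.1.1 + 3 ∧ q.1.1 ≤ q.2.1 + 3 ∧ q.2.2 ≤ q.1.1 + 3 ∧ q.1.1 ≤ q.2.2 + 3)))
    (t := (range n ×ˢ range 7) ×ˢ (range 7 ×ˢ range 7))
    (by
      rintro ⟨⟨i, j⟩, ⟨k, l⟩⟩ hq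
      simp only [Finset.mem_coe, Finset.mem_filter, Finset.mem_product, Finset.mem_range] at hq ⊢
      omega)
    (by
      rintro ⟨⟨i, j⟩, ⟨k, l⟩⟩ hq ⟨⟨i', j'⟩, ⟨k', l'⟩⟩ hq' h
      simp only [Finset.coe_filter, Set.mem_setOf_eq, Finset.mem_product,
        Finset.mem_range, Prod.mk.injEq] at hq hq' h
      obtain ⟨⟨h1, h2⟩, ⟨h3, h4⟩⟩ := h
      simp only [Prod.mk.injEq]
      omega)
  calc _ ≤ ((range n ×ˢ range 7) ×ˢ (range 7 ×ˢ range 7)).card := h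
    _ = 343 * n := by simp [Finset.card_product, card_range]; ring


def sep (a b : ℕ) : Prop := a + 2 ≤ b ∨ b + 2 ≤ a

instance : DecidableRel sep := fun a b => by unfold sep; infer_instance

def goodP (q : (ℕ × ℕ) × (ℕ × ℕ)) : Prop :=
  (sep q.1.1 q.1.2 ∧ sep q.1.1 q.2.1 ∧ sep q.1.1 q.2.2) ∨
  (sep q.1.2 q.1.1 ∧ sep q.1.2 q.2.1 ∧ sep q.1.2 q.2.2) ∨
  (sep q.2.1 q.1.1 ∧ sep q.2.1 q.1.2 ∧ sep q.2.1 q.2.2) ∨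
  (sep q.2.2 q.1.1 ∧ sep q.2.2 q.1.2 ∧ sep q.2.2 q.2.1)

instance : DecidablePred goodP := fun q => by unfold goodP; infer_instance

set_option maxHeartbeats 1000000 in
/-- The mixed fourth central moment `E[(D_n - (n-1)/2)² (D'_n - (n-1)/2)²]`, where
`D_n = des(π)` and `D'_n = des(π⁻¹)` for a uniformly random permutation `π`, is of
order `n²`. -/
theorem descents_inverse_mixed_moment_order :
    ∃ C : ℝ, 0 < C ∧ ∀ n : ℕ, 1 ≤ n →
      (∑ π : Equiv.Perm (Fin n),
          ((des π : ℝ) - ((n : ℝ) - 1) / 2) ^ 2 * ((des π⁻¹ : ℝ) - ((n : ℝ) - 1) / 2) ^ 2)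
        / (Nat.factorial n : ℝ) ≤ C * (n : ℝ) ^ 2 := by
  refine ⟨370, by norm_num, ?_⟩
  intro n hn
  have hfac : (0 : ℝ) < (Nat.factorial n : ℝ) := by exact_mod_cast n.factorial_pos
  rw [div_le_iff₀ hfac]
  set X : Equiv.Perm (Fin n) → ℝ := fun π => (des π : ℝ) - ((n : ℝ) - 1) / 2 with hX
  -- Step 1: reduce to the fourth moment via AM-GM and π ↦ π⁻¹ symmetry
  have hinv : (∑ π : Equiv.Perm (Fin n), X π⁻¹ ^ 4) = ∑ π : Equiv.Perm (Fin n), X π ^ 4 :=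
    Fintype.sum_equiv (Equiv.inv _) _ _ (fun π => rfl)
  have step1 : (∑ π : Equiv.Perm (Fin n), X π ^ 2 * X π⁻¹ ^ 2)
      ≤ ∑ π : Equiv.Perm (Fin n), X π ^ 4 := by
    have h1 : (∑ π : Equiv.Perm (Fin n), X π ^ 2 * X π⁻¹ ^ 2)
        ≤ ∑ π : Equiv.Perm (Fin n), (X π ^ 4 + X π⁻¹ ^ 4) / 2 :=
      Finset.sum_le_sum fun π _ => by nlinarith [sq_nonneg (X π ^ 2 - X π⁻¹ ^ 2)]
    have h2 : (∑ π : Equiv.Perm (Fin n), (X π ^ 4 + X π⁻¹ ^ 4) / 2)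
        = ∑ π : Equiv.Perm (Fin n), X π ^ 4 := by
      rw [← Finset.sum_div, Finset.sum_add_distrib, hinv]; ring
    linarith
  -- Step 2: bound the fourth moment
  set Q : Finset ((ℕ × ℕ) × (ℕ × ℕ)) :=
    (range (n-1) ×ˢ range (n-1)) ×ˢ (range (n-1) ×ˢ range (n-1)) with hQ
  set T : (ℕ × ℕ) × (ℕ × ℕ) → ℝ := fun q =>
    ∑ π : Equiv.Perm (Fin n), Yc q.1.1 π * Yc q.1.2 π * Yc q.2.1 π * Yc q.2.2 π with hT
  have expand : ∑ π : Equiv.Perm (Fin n), X π ^ 4 = ∑ q ∈ Q, T q := by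
    have h1 : ∀ π : Equiv.Perm (Fin n), X π ^ 4
        = ∑ q ∈ Q, Yc q.1.1 π * Yc q.1.2 π * Yc q.2.1 π * Yc q.2.2 π := fun π => by
      rw [hX]; simp only
      rw [des_sub hn, expand_pow4]
    rw [Finset.sum_congr rfl fun π _ => h1 π]
    exact Finset.sum_comm
  have hTgood : ∀ q ∈ Q.filter goodP, T q = 0 := by
    intro q hq
    obtain ⟨⟨i, j⟩, ⟨k, l⟩⟩ := q
    simp only [Finset.mem_filter, hQ, Finset.mem_product, Finset.mem_range, goodP, sep] at hq
    obtain ⟨⟨⟨hi, hj⟩, hk, hl⟩, hgood⟩ := hq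
    rcases hgood with ⟨h1, h2, h3⟩ | ⟨h1, h2, h3⟩ | ⟨h1, h2, h3⟩ | ⟨h1, h2, h3⟩
    · exact T_zero hi hj hk hl h1 h2 h3
    · have : T ((i, j), (k, l)) = ∑ π : Equiv.Perm (Fin n), Yc j π * Yc i π * Yc k π * Yc l π :=
        Finset.sum_congr rfl fun π _ => by ring
      rw [this]; exact T_zero hj hi hk hl h1 h2 h3
    · have : T ((i, j), (k, l)) = ∑ π : Equiv.Perm (Fin n), Yc k π * Yc i π * Yc j π * Yc l π :=
        Finset.sum_congr rfl fun π _ => by ring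
      rw [this]; exact T_zero hk hi hj hl h1 h2 h3
    · have : T ((i, j), (k, l)) = ∑ π : Equiv.Perm (Fin n), Yc l π * Yc i π * Yc j π * Yc k π :=
        Finset.sum_congr rfl fun π _ => by ring
      rw [this]; exact T_zero hl hi hj hk h1 h2 h3
  have hTabs : ∀ q : (ℕ × ℕ) × (ℕ × ℕ), T q ≤ (Nat.factorial n : ℝ) := by
    intro q
    have habs : ∀ π : Equiv.Perm (Fin n),
        |Yc q.1.1 π * Yc q.1.2 π * Yc q.2.1 π * Yc q.2.2 π| ≤ 1 := by
      intro π
      rw [abs_mul, abs_mul, abs_mul]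
      have h1 := Yc_abs q.1.1 π; have h2 := Yc_abs q.1.2 π
      have h3 := Yc_abs q.2.1 π; have h4 := Yc_abs q.2.2 π
      have n1 := abs_nonneg (Yc q.1.1 π); have n2 := abs_nonneg (Yc q.1.2 π)
      have n3 := abs_nonneg (Yc q.2.1 π); have n4 := abs_nonneg (Yc q.2.2 π)
      have p2 : |Yc q.1.1 π| * |Yc q.1.2 π| ≤ 1 := by nlinarith
      have p2n : (0:ℝ) ≤ |Yc q.1.1 π| * |Yc q.1.2 π| := mul_nonneg n1 n2
      have p3 : |Yc q.1.1 π| * |Yc q.1.2 π| * |Yc q.2.1 π| ≤ 1 := by nlinarith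
      have p3n : (0:ℝ) ≤ |Yc q.1.1 π| * |Yc q.1.2 π| * |Yc q.2.1 π| := mul_nonneg p2n n3
      nlinarith
    calc T q ≤ |T q| := le_abs_self _
      _ ≤ ∑ π : Equiv.Perm (Fin n),
            |Yc q.1.1 π * Yc q.1.2 π * Yc q.2.1 π * Yc q.2.2 π| :=
          Finset.abs_sum_le_sum_abs _ _
      _ ≤ ∑ _π : Equiv.Perm (Fin n), (1 : ℝ) := Finset.sum_le_sum fun π _ => habs π
      _ = (Nat.factorial n : ℝ) := by
          simp [Finset.card_univ, Fintype.card_perm, Fintype.card_fin]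
  -- count bad quadruples
  have hcard : (Q.filter (fun q => ¬ goodP q)).card ≤ 27 * n ^ 2 + 343 * n := by
    have hsub : Q.filter (fun q => ¬ goodP q) ⊆
        (Q.filter (fun q : (ℕ × ℕ) × (ℕ × ℕ) => q.1.1 ≤ q.1.2 + 1 ∧ q.1.2 ≤ q.1.1 + 1 ∧
          q.2.1 ≤ q.2.2 + 1 ∧ q.2.2 ≤ q.2.1 + 1)) ∪
        (Q.filter (fun q : (ℕ × ℕ) × (ℕ × ℕ) => q.1.1 ≤ q.2.1 + 1 ∧ q.2.1 ≤ q.1.1 + 1 ∧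
          q.1.2 ≤ q.2.2 + 1 ∧ q.2.2 ≤ q.1.2 + 1)) ∪
        (Q.filter (fun q : (ℕ × ℕ) × (ℕ × ℕ) => q.1.1 ≤ q.2.2 + 1 ∧ q.2.2 ≤ q.1.1 + 1 ∧
          q.1.2 ≤ q.2.1 + 1 ∧ q.2.1 ≤ q.1.2 + 1)) ∪
        (Q.filter (fun q : (ℕ × ℕ) × (ℕ × ℕ) => q.1.2 ≤ q.1.1 + 3 ∧ q.1.1 ≤ q.1.2 + 3 ∧
          q.2.1 ≤ q.1.1 + 3 ∧ q.1.1 ≤ q.2.1 + 3 ∧ q.2.2 ≤ q.1.1 + 3 ∧ q.1.1 ≤ q.2.2 + 3)) := by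
      intro q hq
      obtain ⟨⟨i, j⟩, ⟨k, l⟩⟩ := q
      simp only [Finset.mem_filter, Finset.mem_union] at hq ⊢
      simp only [goodP, sep] at hq ⊢
      obtain ⟨hqQ, hb⟩ := hq
      have hcov : (i ≤ j + 1 ∧ j ≤ i + 1 ∧ k ≤ l + 1 ∧ l ≤ k + 1) ∨
          ((i ≤ k + 1 ∧ k ≤ i + 1 ∧ j ≤ l + 1 ∧ l ≤ j + 1) ∨
          ((i ≤ l + 1 ∧ l ≤ i + 1 ∧ j ≤ k + 1 ∧ k ≤ j + 1) ∨
          (j ≤ i + 3 ∧ i ≤ j + 3 ∧ k ≤ i + 3 ∧ i ≤ k + 3 ∧ l ≤ i + 3 ∧ i ≤ l + 3))) := by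
        omega
      rcases hcov with h | h | h | h
      · exact Or.inl (Or.inl (Or.inl ⟨hqQ, h⟩))
      · exact Or.inl (Or.inl (Or.inr ⟨hqQ, h⟩))
      · exact Or.inl (Or.inr ⟨hqQ, h⟩)
      · exact Or.inr ⟨hqQ, h⟩
    calc (Q.filter (fun q => ¬ goodP q)).card ≤ _ := Finset.card_le_card hsub
      _ ≤ 9 * n ^ 2 + 9 * n ^ 2 + 9 * n ^ 2 + 343 * n := by
        refine le_trans (Finset.card_union_le _ _) ?_
        refine add_le_add (le_trans (Finset.card_union_le _ _) ?_) (cardB4 n)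
        refine add_le_add (le_trans (Finset.card_union_le _ _) ?_) (cardB3 n)
        exact add_le_add (cardB1 n) (cardB2 n)
      _ = 27 * n ^ 2 + 343 * n := by ring
  -- assemble
  have step2 : (∑ π : Equiv.Perm (Fin n), X π ^ 4)
      ≤ (27 * (n : ℝ) ^ 2 + 343 * n) * (Nat.factorial n : ℝ) := by
    rw [expand, ← Finset.sum_filter_add_sum_filter_not Q goodP T,
      Finset.sum_congr rfl hTgood, Finset.sum_const_zero, zero_add]
    calc ∑ q ∈ Q.filter (fun q => ¬ goodP q), T q
        ≤ ∑ _q ∈ Q.filter (fun q => ¬ goodP q), (Nat.factorial n : ℝ) :=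
          Finset.sum_le_sum fun q _ => hTabs q
      _ = ((Q.filter (fun q => ¬ goodP q)).card : ℝ) * (Nat.factorial n : ℝ) := by
          rw [Finset.sum_const, nsmul_eq_mul]
      _ ≤ (27 * (n : ℝ) ^ 2 + 343 * n) * (Nat.factorial n : ℝ) := by
          have hc : ((Q.filter (fun q => ¬ goodP q)).card : ℝ)
              ≤ 27 * (n : ℝ) ^ 2 + 343 * n := by exact_mod_cast hcard
          exact mul_le_mul_of_nonneg_right hc hfac.le
  have hbound : (27 * (n : ℝ) ^ 2 + 343 * n) * (Nat.factorial n : ℝ)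
      ≤ 370 * (n : ℝ) ^ 2 * (Nat.factorial n : ℝ) := by
    have hn' : (1 : ℝ) ≤ (n : ℝ) := by exact_mod_cast hn
    have h : 27 * (n : ℝ) ^ 2 + 343 * n ≤ 370 * (n : ℝ) ^ 2 := by nlinarith
    exact mul_le_mul_of_nonneg_right h hfac.le
  calc (∑ π : Equiv.Perm (Fin n), X π ^ 2 * X π⁻¹ ^ 2)
      ≤ ∑ π : Equiv.Perm (Fin n), X π ^ 4 := step1
    _ ≤ (27 * (n : ℝ) ^ 2 + 343 * n) * (Nat.factorial n : ℝ) := step2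
    _ ≤ 370 * (n : ℝ) ^ 2 * (Nat.factorial n : ℝ) := hbound
end
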